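/- arXiv:1701.01307 — 5 statements merged into one kernel-verified Lean document; each statement's English description precedes it below -/
import Mathlib

section
/- Let n ≥ 1 and let G₀ = G_{0ⁿ} be the set associated with the word consisting of n zeros. Then G₀ is a connected subset of ℝ² if and only if |ε| ≤ p^{n+1}. -/
noncomputable section

open Filter Topology

/-! ### Generic geometric sum machinery -/

lemma geom_summable {P : ℝ} (hP : 1 < P) : Summable (fun k : ℕ => (P ^ (k+1))⁻¹) := by
  have h0 : (0:ℝ) ≤ P⁻¹ := by positivity
  have h1 : P⁻¹ < 1 := by
    rw [inv_lt_one_iff₀]; right; exact hP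
  have := (summable_geometric_of_lt_one h0 h1).mul_left P⁻¹
  refine this.congr fun k => ?_
  rw [← inv_pow, ← pow_succ']

lemma geom_tsum {P : ℝ} (hP : 1 < P) : ∑' k : ℕ, (P ^ (k+1))⁻¹ = (P - 1)⁻¹ := by
  have h0 : (0:ℝ) ≤ P⁻¹ := by positivity
  have h1 : P⁻¹ < 1 := by rw [inv_lt_one_iff₀]; right; exact hP
  have hg := tsum_geometric_of_lt_one h0 h1
  have hrw : ∀ k : ℕ, (P ^ (k+1))⁻¹ = P⁻¹ * (P⁻¹)^k := by
    intro k; rw [← inv_pow, ← pow_succ']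
  calc ∑' k : ℕ, (P ^ (k+1))⁻¹ = ∑' k : ℕ, P⁻¹ * (P⁻¹)^k := by
        exact tsum_congr hrw
    _ = P⁻¹ * (1 - P⁻¹)⁻¹ := by rw [tsum_mul_left, hg]
    _ = (P - 1)⁻¹ := by
        have hP0 : P ≠ 0 := by linarith
        have hP1 : P - 1 ≠ 0 := by linarith
        have h1P : (1:ℝ) - P⁻¹ = (P-1)/P := by field_simp
        rw [h1P]
        rw [inv_div]
        field_simp

lemma summable_digit {P : ℝ} (hP : 1 < P) {C : ℝ} (c : ℕ → ℝ) (hc : ∀ k, |c k| ≤ C) :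
    Summable (fun k : ℕ => (P ^ (k+1))⁻¹ * c k) := by
  have habs : Summable (fun k : ℕ => |(P ^ (k+1))⁻¹ * c k|) := by
    apply Summable.of_nonneg_of_le (fun k => abs_nonneg _)
      (f := fun k => (P ^ (k+1))⁻¹ * C)
    · intro k
      rw [abs_mul]
      have h1 : |(P ^ (k+1))⁻¹| = (P ^ (k+1))⁻¹ := by
        rw [abs_of_nonneg]; positivity
      rw [h1]
      exact mul_le_mul_of_nonneg_left (hc k) (by positivity)
    · exact (geom_summable hP).mul_right C
  exact habs.of_abs

lemma abs_tsum_le' {f : ℕ → ℝ} (hf : Summable f) : |∑' k, f k| ≤ ∑' k, |f k| := by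
  rw [abs_le]
  constructor
  · have : ∑' k, -f k ≤ ∑' k, |f k| :=
      Summable.tsum_le_tsum (fun k => neg_le_abs _) hf.neg hf.abs
    rw [tsum_neg] at this; linarith
  · exact Summable.tsum_le_tsum (fun k => le_abs_self _) hf hf.abs

lemma tsum_digit_abs_le {P : ℝ} (hP : 1 < P) {C : ℝ} (c : ℕ → ℝ) (hc : ∀ k, |c k| ≤ C) :
    |∑' k : ℕ, (P ^ (k+1))⁻¹ * c k| ≤ C * (P - 1)⁻¹ := by
  have hsum := summable_digit hP c hc
  have habs : Summable (fun k : ℕ => |(P ^ (k+1))⁻¹ * c k|) := hsum.abs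
  have h1 : |∑' k : ℕ, (P ^ (k+1))⁻¹ * c k| ≤ ∑' k : ℕ, |(P ^ (k+1))⁻¹ * c k| := by
    exact abs_tsum_le' hsum
  refine h1.trans ?_
  have h2 : ∑' k : ℕ, |(P ^ (k+1))⁻¹ * c k| ≤ ∑' k : ℕ, (P ^ (k+1))⁻¹ * C := by
    apply Summable.tsum_le_tsum _ habs ((geom_summable hP).mul_right C)
    intro k
    rw [abs_mul]
    have h1 : |(P ^ (k+1))⁻¹| = (P ^ (k+1))⁻¹ := by rw [abs_of_nonneg]; positivity
    rw [h1]
    exact mul_le_mul_of_nonneg_left (hc k) (by positivity)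
  refine h2.trans ?_
  rw [tsum_mul_right, geom_tsum hP, mul_comm]

/-! ### The coordinate functions -/

/-- `Yv P j = ∑ P^{-(k+1)} j_k`. -/
def Yv (P : ℝ) (j : ℕ → ℤ) : ℝ := ∑' k : ℕ, (P ^ (k+1))⁻¹ * (j k : ℝ)

/-- `Pv P j = ∑_{j_k odd} P^{-(k+1)}`. -/
def Pv (P : ℝ) (j : ℕ → ℤ) : ℝ :=
  ∑' k : ℕ, (P ^ (k+1))⁻¹ * (if Odd (j k) then (1:ℝ) else 0)

section basic
variable {m : ℕ} {P : ℝ} (hP : (3:ℝ) ≤ P)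

lemma oneltP (hP : (3:ℝ) ≤ P) : (1:ℝ) < P := by linarith

lemma summable_Yv (hP : (3:ℝ) ≤ P) {j : ℕ → ℤ} (hj : ∀ k, |j k| ≤ (m:ℤ)) :
    Summable (fun k : ℕ => (P ^ (k+1))⁻¹ * (j k : ℝ)) := by
  apply summable_digit (oneltP hP) (C := (m:ℝ))
  intro k
  rw [← Int.cast_abs]
  exact_mod_cast hj k

lemma summable_Pv (hP : (3:ℝ) ≤ P) (j : ℕ → ℤ) :
    Summable (fun k : ℕ => (P ^ (k+1))⁻¹ * (if Odd (j k) then (1:ℝ) else 0)) := by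
  apply summable_digit (oneltP hP) (C := (1:ℝ))
  intro k
  show |(if Odd (j k) then (1:ℝ) else 0)| ≤ 1
  split <;> simp

lemma Pv_nonneg (hP : (3:ℝ) ≤ P) (j : ℕ → ℤ) : 0 ≤ Pv P j := by
  apply tsum_nonneg
  intro k
  have : (0:ℝ) ≤ (P ^ (k+1))⁻¹ := by positivity
  split <;> nlinarith

lemma Pv_le (hP : (3:ℝ) ≤ P) (j : ℕ → ℤ) : Pv P j ≤ (P - 1)⁻¹ := by
  have h := tsum_digit_abs_le (oneltP hP) (C := 1)
    (fun k => (if Odd (j k) then (1:ℝ) else 0)) (by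
      intro k
      show |(if Odd (j k) then (1:ℝ) else 0)| ≤ 1
      split <;> simp)
  rw [one_mul] at h
  exact (abs_le.mp h).2

/-- In the balanced case `P = 2m+1`, `|Yv| ≤ 1/2`. -/
lemma abs_Yv_le (hm : 1 ≤ m) (hPm : P = 2*(m:ℝ)+1) {j : ℕ → ℤ}
    (hj : ∀ k, |j k| ≤ (m:ℤ)) : |Yv P j| ≤ 1/2 := by
  have hm' : (1:ℝ) ≤ (m:ℝ) := by exact_mod_cast hm
  have hP : (3:ℝ) ≤ P := by rw [hPm]; linarith
  have h := tsum_digit_abs_le (oneltP hP) (C := (m:ℝ))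
    (fun k => ((j k : ℝ))) (by intro k; rw [← Int.cast_abs]; exact_mod_cast hj k)
  have : (m:ℝ) * (P-1)⁻¹ = 1/2 := by
    rw [hPm]; rw [show (2*(m:ℝ)+1-1) = 2*m by ring]
    rw [mul_inv]
    field_simp
  rw [this] at h
  exact h

end basic

/-! ### Digit expansions of reals in [-1/2, 1/2] -/

/-- the balanced digit of `s`. -/
def dg (m : ℕ) (P : ℝ) (s : ℝ) : ℤ := max (-(m:ℤ)) (min (m:ℤ) ⌊P * s + 1/2⌋)

lemma abs_dg_le (m : ℕ) (P : ℝ) (s : ℝ) : |dg m P s| ≤ (m:ℤ) := by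
  rw [abs_le]; unfold dg
  constructor
  · exact le_max_left _ _
  · apply max_le
    · omega
    · exact min_le_left _ _

/-- iterated remainder -/
def Tst (m : ℕ) (P : ℝ) (t : ℝ) : ℕ → ℝ
  | 0 => t
  | k+1 => P * Tst m P t k - (dg m P (Tst m P t k) : ℝ)

lemma dg_step (m : ℕ) {P : ℝ} (hm : 1 ≤ m) (hPm : P = 2*(m:ℝ)+1) {s : ℝ}
    (hs : |s| ≤ 1/2) : |P * s - (dg m P s : ℝ)| ≤ 1/2 := by
  have hm' : (1:ℝ) ≤ (m:ℝ) := by exact_mod_cast hm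
  obtain ⟨hs1, hs2⟩ := abs_le.mp hs
  set u := P * s with hu
  have hu1 : -((m:ℝ) + 1/2) ≤ u := by rw [hu, hPm]; nlinarith
  have hu2 : u ≤ (m:ℝ) + 1/2 := by rw [hu, hPm]; nlinarith
  set d0 := ⌊u + 1/2⌋ with hd0
  have hfl : (d0 : ℝ) ≤ u + 1/2 := Int.floor_le _
  have hfu : u + 1/2 < d0 + 1 := Int.lt_floor_add_one _
  rcases le_or_gt d0 (-(m:ℤ)) with h1 | h1
  · -- dg = -m
    have hdg : dg m P s = -(m:ℤ) := by
      unfold dg; rw [← hu, ← hd0, min_eq_right (by omega : d0 ≤ (m:ℤ)),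
        max_eq_left h1]
    rw [hdg]
    have hc : (d0:ℝ) ≤ -(m:ℝ) := by exact_mod_cast h1
    push_cast
    rw [abs_le]; constructor <;> linarith
  · rcases le_or_gt (m:ℤ) d0 with h2 | h2
    · -- dg = m
      have hdg : dg m P s = (m:ℤ) := by
        unfold dg; rw [← hu, ← hd0, min_eq_left h2, max_eq_right (by omega)]
      rw [hdg]
      have hc : (m:ℝ) ≤ (d0:ℝ) := by exact_mod_cast h2
      push_cast
      rw [abs_le]; constructor <;> linarith
    · -- dg = d0
      have hdg : dg m P s = d0 := by
        unfold dg; rw [← hu, ← hd0, min_eq_right (le_of_lt h2),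
          max_eq_right (by omega)]
      rw [hdg]
      rw [abs_le]; constructor <;> linarith

lemma Tst_bound (m : ℕ) {P : ℝ} (hm : 1 ≤ m) (hPm : P = 2*(m:ℝ)+1) {t : ℝ}
    (ht : |t| ≤ 1/2) : ∀ k, |Tst m P t k| ≤ 1/2 := by
  intro k
  induction k with
  | zero => exact ht
  | succ k ih => exact dg_step m hm hPm ih

lemma Tst_partial (m : ℕ) {P : ℝ} (hP : (3:ℝ) ≤ P) (t : ℝ) (K : ℕ) :
    t = (∑ k ∈ Finset.range K, (P ^ (k+1))⁻¹ * (dg m P (Tst m P t k) : ℝ))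
        + (P^K)⁻¹ * Tst m P t K := by
  have hP0 : P ≠ 0 := by linarith
  induction K with
  | zero => simp [Tst]
  | succ K ih =>
    rw [Finset.sum_range_succ]
    have hstep : (P^(K+1))⁻¹ * Tst m P t (K+1)
        = (P^K)⁻¹ * Tst m P t K - (P^(K+1))⁻¹ * (dg m P (Tst m P t K) : ℝ) := by
      rw [show Tst m P t (K+1) = P * Tst m P t K - (dg m P (Tst m P t K) : ℝ) from rfl]
      have h1 : (P^(K+1) : ℝ) ≠ 0 := by positivity
      have h2 : (P^K : ℝ) ≠ 0 := by positivity
      field_simp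
      ring
    rw [hstep]
    linarith [ih]

lemma exists_digits (m : ℕ) {P : ℝ} (hm : 1 ≤ m) (hPm : P = 2*(m:ℝ)+1) {t : ℝ}
    (ht : |t| ≤ 1/2) :
    ∃ i : ℕ → ℤ, (∀ k, |i k| ≤ (m:ℤ)) ∧ t = Yv P i := by
  have hm' : (1:ℝ) ≤ (m:ℝ) := by exact_mod_cast hm
  have hP : (3:ℝ) ≤ P := by rw [hPm]; linarith
  refine ⟨fun k => dg m P (Tst m P t k), fun k => abs_dg_le m P _, ?_⟩
  have hsum := summable_Yv (m := m) hP (j := fun k => dg m P (Tst m P t k))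
    (fun k => abs_dg_le m P _)
  have htend : Tendsto (fun K => ∑ k ∈ Finset.range K,
      (P ^ (k+1))⁻¹ * ((dg m P (Tst m P t k) : ℤ) : ℝ)) atTop (𝓝 t) := by
    have heq : ∀ K, ∑ k ∈ Finset.range K, (P ^ (k+1))⁻¹ * ((dg m P (Tst m P t k) : ℤ) : ℝ)
        = t - (P^K)⁻¹ * Tst m P t K := by
      intro K
      have := Tst_partial m hP t K
      linarith
    rw [show (𝓝 t) = 𝓝 (t - 0) by rw [sub_zero]]
    apply Tendsto.congr (fun K => (heq K).symm)
    apply Tendsto.sub tendsto_const_nhds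
    -- (P^K)⁻¹ * Tst K → 0
    apply squeeze_zero_norm (a := fun K => (P⁻¹)^K * (1/2))
    · intro K
      rw [norm_mul]
      have h1 : ‖(P^K)⁻¹‖ = (P⁻¹)^K := by
        rw [Real.norm_eq_abs, abs_of_nonneg (by positivity), inv_pow]
      rw [h1]
      apply mul_le_mul_of_nonneg_left _ (by positivity)
      rw [Real.norm_eq_abs]
      exact Tst_bound m hm hPm ht K
    · rw [show (0:ℝ) = 0 * (1/2) by ring]
      apply Tendsto.mul_const
      apply tendsto_pow_atTop_nhds_zero_of_lt_one (by positivity)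
      rw [inv_lt_one_iff₀]; right; linarith
  have := (hsum.hasSum_iff_tendsto_nat).mpr htend
  exact this.tsum_eq.symm
/-! ### The normalized description of `G_{0^n}` -/

/-- `b_j = ε` if `j` is odd and `b_j = 0` if `j` is even. -/
def bshift (ε : ℝ) (j : ℤ) : ℝ := if Odd j then ε else 0

/-- The self-similar set `T_ε` associated with `p = 2m+1` and the shift `ε`. -/
def Tset (p : ℤ) (m : ℕ) (ε : ℝ) : Set (ℝ × ℝ) :=
  { z | ∃ i j : ℕ → ℤ, (∀ k, |i k| ≤ (m : ℤ)) ∧ (∀ k, |j k| ≤ (m : ℤ)) ∧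
      z.1 = ∑' k : ℕ, ((p : ℝ) ^ (k + 1))⁻¹ * ((i k : ℝ) + bshift ε (j k)) ∧
      z.2 = ∑' k : ℕ, ((p : ℝ) ^ (k + 1))⁻¹ * (j k : ℝ) }

/-- The map `f_{i,j}(x, y) = ((x + i + b_j)/p, (y + j)/p)`. -/
def fmap (p : ℤ) (ε : ℝ) (i j : ℤ) (z : ℝ × ℝ) : ℝ × ℝ :=
  ((z.1 + (i : ℝ) + bshift ε j) / (p : ℝ), (z.2 + (j : ℝ)) / (p : ℝ))

/-- For a word `j₁ ⋯ j_n` (a list of integers in `{-m, …, m}`),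
`G_{j₁⋯j_n} = ⋃_{i₁,…,i_n ∈ {-m,…,m}} f_{i₁,j₁} ∘ ⋯ ∘ f_{i_n,j_n}(T_ε)`. -/
def Gset (p : ℤ) (m : ℕ) (ε : ℝ) : List ℤ → Set (ℝ × ℝ)
  | [] => Tset p m ε
  | j :: w => ⋃ i ∈ Finset.Icc (-(m : ℤ)) (m : ℤ), fmap p ε i j '' Gset p m ε w

/-- normalized form of the pieces of `G_{0^n}` -/
def Kset (P : ℝ) (m : ℕ) (ε : ℝ) (n : ℕ) : Set (ℝ × ℝ) :=
  { z | ∃ j : ℕ → ℤ, (∀ k, |j k| ≤ (m : ℤ)) ∧ z.2 * P^n = Yv P j ∧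
      |z.1 * P^n - ε * Pv P j| ≤ P^n / 2 }

lemma bshift_zero (ε : ℝ) : bshift ε 0 = 0 := by
  have : ¬ Odd (0:ℤ) := by decide
  simp [bshift, this]

lemma bshift_eq (ε : ℝ) (j : ℤ) : bshift ε j = ε * (if Odd j then (1:ℝ) else 0) := by
  unfold bshift; split <;> simp

section gsets
variable {m : ℕ} {p : ℤ} {ε : ℝ}

lemma Pcast (hm : 1 ≤ m) (hp : p = 2 * (m:ℤ) + 1) : ((p:ℝ) = 2*(m:ℝ)+1) := by
  rw [hp]; push_cast; ring

lemma P3 (hm : 1 ≤ m) (hp : p = 2 * (m:ℤ) + 1) : (3:ℝ) ≤ (p:ℝ) := by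
  rw [Pcast hm hp]
  have : (1:ℝ) ≤ (m:ℝ) := by exact_mod_cast hm
  linarith

/-- decomposition of the first coordinate sum -/
lemma xsum_split (hm : 1 ≤ m) (hp : p = 2 * (m:ℤ) + 1) (i j : ℕ → ℤ)
    (hi : ∀ k, |i k| ≤ (m : ℤ)) :
    ∑' k : ℕ, ((p : ℝ) ^ (k + 1))⁻¹ * ((i k : ℝ) + bshift ε (j k))
      = Yv (p:ℝ) i + ε * Pv (p:ℝ) j := by
  have hP := P3 hm hp
  have hsi := summable_Yv (m := m) hP hi
  have hsb : Summable (fun k : ℕ => ((p:ℝ) ^ (k+1))⁻¹ * bshift ε (j k)) := by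
    apply summable_digit (oneltP hP) (C := |ε|)
    intro k
    rw [bshift_eq]
    rw [abs_mul]
    rcases le_or_gt (|ε|) 0 with h | h
    · split <;> simp <;> nlinarith [abs_nonneg ε]
    · split <;> simp
  have h1 : ∀ k : ℕ, ((p : ℝ) ^ (k + 1))⁻¹ * ((i k : ℝ) + bshift ε (j k))
      = ((p:ℝ) ^ (k+1))⁻¹ * (i k : ℝ) + ((p:ℝ) ^ (k+1))⁻¹ * bshift ε (j k) := by
    intro k; ring
  rw [tsum_congr h1, hsi.tsum_add hsb]
  unfold Yv Pv
  congr 1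
  have h2 : ∀ k : ℕ, ((p:ℝ) ^ (k+1))⁻¹ * bshift ε (j k)
      = ε * (((p:ℝ) ^ (k+1))⁻¹ * (if Odd (j k) then (1:ℝ) else 0)) := by
    intro k; rw [bshift_eq]; ring
  rw [tsum_congr h2, tsum_mul_left]

lemma Tset_char (hm : 1 ≤ m) (hp : p = 2 * (m:ℤ) + 1) :
    Tset p m ε = Kset (p:ℝ) m ε 0 := by
  have hP := P3 hm hp
  have hPm := Pcast hm hp
  ext z
  simp only [Tset, Kset, Set.mem_setOf_eq, pow_zero, mul_one]
  constructor
  · rintro ⟨i, j, hi, hj, hx, hy⟩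
    refine ⟨j, hj, hy, ?_⟩
    rw [hx, xsum_split hm hp i j hi]
    have : Yv (p:ℝ) i + ε * Pv (p:ℝ) j - ε * Pv (p:ℝ) j = Yv (p:ℝ) i := by ring
    rw [this]
    have := abs_Yv_le hm hPm hi
    linarith [this]
  · rintro ⟨j, hj, hy, hx⟩
    obtain ⟨i, hi, hiv⟩ := exists_digits m hm hPm (t := z.1 - ε * Pv (p:ℝ) j) (by linarith [hx])
    refine ⟨i, j, hi, hj, ?_, hy⟩
    rw [xsum_split hm hp i j hi, ← hiv]
    ring

/-- the rounding lemma -/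
lemma round_step (hm : 1 ≤ m) (hp : p = 2 * (m:ℤ) + 1) (n : ℕ) (r : ℝ)
    (hr : |r| ≤ (p:ℝ)^(n+1)/2) :
    ∃ i : ℤ, |i| ≤ (m:ℤ) ∧ |r - (p:ℝ)^n * i| ≤ (p:ℝ)^n / 2 := by
  have hP := P3 hm hp
  have hPm := Pcast hm hp
  have hpos : (0:ℝ) < (p:ℝ)^n := by positivity
  have hpos1 : (0:ℝ) < (p:ℝ)^(n+1) := by positivity
  set s := r / (p:ℝ)^(n+1) with hs
  have hs2 : |s| ≤ 1/2 := by
    rw [hs, abs_div, abs_of_pos hpos1, div_le_div_iff₀ hpos1 (by norm_num)]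
    linarith [hr]
  refine ⟨dg m (p:ℝ) s, abs_dg_le m (p:ℝ) s, ?_⟩
  have := dg_step m hm hPm hs2
  have hPs : (p:ℝ) * s = r / (p:ℝ)^n := by
    rw [hs]; field_simp; ring
  rw [hPs] at this
  have h3 : r - (p:ℝ)^n * (dg m (p:ℝ) s : ℝ)
      = (r / (p:ℝ)^n - (dg m (p:ℝ) s : ℝ)) * (p:ℝ)^n := by
    field_simp
  rw [abs_le] at this ⊢
  rw [h3]
  constructor <;> nlinarith [this.1, this.2, hpos]

lemma Gset_eq_Kset (hm : 1 ≤ m) (hp : p = 2 * (m:ℤ) + 1) (n : ℕ) :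
    Gset p m ε (List.replicate n 0) = Kset (p:ℝ) m ε n := by
  have hP := P3 hm hp
  have hPm := Pcast hm hp
  have hm' : (1:ℝ) ≤ (m:ℝ) := by exact_mod_cast hm
  have hP0 : (p:ℝ) ≠ 0 := by linarith
  induction n with
  | zero => rw [List.replicate_zero]; exact Tset_char hm hp
  | succ n ih =>
    rw [List.replicate_succ]
    show ⋃ i ∈ Finset.Icc (-(m : ℤ)) (m : ℤ),
      fmap p ε i 0 '' Gset p m ε (List.replicate n 0) = _
    rw [ih]
    ext z
    simp only [Set.mem_iUnion, Set.mem_image, Finset.mem_Icc, Kset, Set.mem_setOf_eq]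
    constructor
    · rintro ⟨i, hi, w, ⟨j, hj, hy, hx⟩, hzw⟩
      refine ⟨j, hj, ?_, ?_⟩
      · rw [← hzw]
        show (w.2 + ((0:ℤ):ℝ)) / (p:ℝ) * (p:ℝ)^(n+1) = _
        push_cast
        rw [← hy]
        field_simp
        ring
      · rw [← hzw]
        show |(w.1 + (i : ℝ) + bshift ε 0) / (p:ℝ) * (p:ℝ)^(n+1) - ε * Pv (p:ℝ) j| ≤ _
        rw [bshift_zero]
        have he : (w.1 + (i : ℝ) + 0) / (p:ℝ) * (p:ℝ)^(n+1)
            = w.1 * (p:ℝ)^n + (i:ℝ) * (p:ℝ)^n := by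
          field_simp; ring
        rw [he]
        have hie : |(i:ℝ)| ≤ (m:ℝ) := by rw [← Int.cast_abs]; exact_mod_cast abs_le.mpr hi
        have h1 : |w.1 * (p:ℝ)^n + (i:ℝ) * (p:ℝ)^n - ε * Pv (p:ℝ) j|
            ≤ |w.1 * (p:ℝ)^n - ε * Pv (p:ℝ) j| + |(i:ℝ)| * (p:ℝ)^n := by
          have := abs_add_le (w.1 * (p:ℝ)^n - ε * Pv (p:ℝ) j) ((i:ℝ) * (p:ℝ)^n)
          rw [abs_mul, abs_of_pos (by positivity : (0:ℝ) < (p:ℝ)^n)] at this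
          calc |w.1 * (p:ℝ)^n + (i:ℝ) * (p:ℝ)^n - ε * Pv (p:ℝ) j|
              = |(w.1 * (p:ℝ)^n - ε * Pv (p:ℝ) j) + (i:ℝ) * (p:ℝ)^n| := by ring_nf
            _ ≤ _ := this
        have h2 : (0:ℝ) < (p:ℝ)^n := by positivity
        calc |w.1 * (p:ℝ)^n + (i:ℝ) * (p:ℝ)^n - ε * Pv (p:ℝ) j|
            ≤ (p:ℝ)^n/2 + (m:ℝ) * (p:ℝ)^n := by
              refine h1.trans ?_
              have := mul_le_mul_of_nonneg_right hie (le_of_lt h2)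
              linarith [hx]
          _ = (p:ℝ)^(n+1)/2 := by rw [pow_succ, hPm]; ring
    · rintro ⟨j, hj, hy, hx⟩
      obtain ⟨i, hi, hri⟩ := round_step hm hp n (z.1 * (p:ℝ)^(n+1) - ε * Pv (p:ℝ) j) hx
      refine ⟨i, abs_le.mp hi, (z.1 * (p:ℝ) - i, z.2 * (p:ℝ)), ⟨j, hj, ?_, ?_⟩, ?_⟩
      · show z.2 * (p:ℝ) * (p:ℝ)^n = _
        rw [← hy]; ring
      · show |(z.1 * (p:ℝ) - i) * (p:ℝ)^n - ε * Pv (p:ℝ) j| ≤ _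
        have he : (z.1 * (p:ℝ) - i) * (p:ℝ)^n - ε * Pv (p:ℝ) j
            = (z.1 * (p:ℝ)^(n+1) - ε * Pv (p:ℝ) j) - (p:ℝ)^n * i := by
          ring
        rw [he]; exact hri
      · show fmap p ε i 0 _ = z
        simp only [fmap, bshift_zero, Int.cast_zero, add_zero]
        have e1 : (z.1 * (p:ℝ) - (i:ℝ) + (i:ℝ)) / (p:ℝ) = z.1 := by field_simp; ring
        have e2 : z.2 * (p:ℝ) / (p:ℝ) = z.2 := by field_simp
        rw [Prod.mk.injEq]
        exact ⟨e1, e2⟩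

/-! ### The normalized set and its structure -/

def Knorm (P β : ℝ) (m : ℕ) : Set (ℝ × ℝ) :=
  { z | ∃ j : ℕ → ℤ, (∀ k, |j k| ≤ (m : ℤ)) ∧ z.2 = Yv P j ∧ |z.1 - β * Pv P j| ≤ 1/2 }

section machinery
variable {m : ℕ} {P : ℝ}

/-- splitting a digit sum at position `N` -/
lemma Yv_split (hP : (3:ℝ) ≤ P) {j : ℕ → ℤ} (hj : ∀ k, |j k| ≤ (m:ℤ)) (N : ℕ) :
    Yv P j = (∑ k ∈ Finset.range N, (P ^ (k+1))⁻¹ * (j k : ℝ))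
      + (P^N)⁻¹ * Yv P (fun k => j (k + N)) := by
  have hsum := summable_Yv (m := m) hP hj
  have h := (hsum.sum_add_tsum_nat_add N).symm
  unfold Yv
  rw [h]
  congr 1
  have : ∀ k : ℕ, (P ^ ((k + N) + 1))⁻¹ * (j (k + N) : ℝ)
      = (P^N)⁻¹ * ((P ^ (k+1))⁻¹ * (j (k + N) : ℝ)) := by
    intro k
    rw [show (k + N) + 1 = (k + 1) + N by ring, pow_add, mul_inv]
    ring
  rw [tsum_congr this, tsum_mul_left]

lemma Pv_split (hP : (3:ℝ) ≤ P) (j : ℕ → ℤ) (N : ℕ) :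
    Pv P j = (∑ k ∈ Finset.range N, (P ^ (k+1))⁻¹ * (if Odd (j k) then (1:ℝ) else 0))
      + (P^N)⁻¹ * Pv P (fun k => j (k + N)) := by
  have hsum := summable_Pv hP j
  have h := (hsum.sum_add_tsum_nat_add N).symm
  unfold Pv
  rw [h]
  congr 1
  have : ∀ k : ℕ, (P ^ ((k + N) + 1))⁻¹ * (if Odd (j (k + N)) then (1:ℝ) else 0)
      = (P^N)⁻¹ * ((P ^ (k+1))⁻¹ * (if Odd (j (k + N)) then (1:ℝ) else 0)) := by
    intro k
    rw [show (k + N) + 1 = (k + 1) + N by ring, pow_add, mul_inv]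
    ring
  rw [tsum_congr this, tsum_mul_left]

lemma Yv_const (hP : (3:ℝ) ≤ P) (c : ℤ) : Yv P (fun _ => c) = (c : ℝ) * (P - 1)⁻¹ := by
  unfold Yv
  rw [tsum_mul_right, geom_tsum (oneltP hP)]
  ring

lemma Pv_const (hP : (3:ℝ) ≤ P) (c : ℤ) :
    Pv P (fun _ => c) = (if Odd c then (1:ℝ) else 0) * (P - 1)⁻¹ := by
  unfold Pv
  rw [tsum_mul_right, geom_tsum (oneltP hP)]
  ring

/-- the digit clamp -/
def clampd (m : ℕ) (x : ℤ) : ℤ := max (-(m:ℤ)) (min (m:ℤ) x)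

lemma clampd_eq {m : ℕ} {x : ℤ} (h : |x| ≤ (m:ℤ)) : clampd m x = x := by
  unfold clampd; rw [abs_le] at h; omega

lemma abs_clampd_le (m : ℕ) (x : ℤ) : |clampd m x| ≤ (m:ℤ) := by
  unfold clampd; rw [abs_le]; omega

/-- the parametrization map -/
def Phi (P β : ℝ) (m : ℕ) (w : (ℕ → ℤ) × ℝ) : ℝ × ℝ :=
  (β * Pv P (fun k => clampd m (w.1 k)) + w.2, Yv P (fun k => clampd m (w.1 k)))

def digS (m : ℕ) : Set (ℕ → ℤ) := { j | ∀ k, |j k| ≤ (m:ℤ) }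

lemma Phi_eq {β : ℝ} {j : ℕ → ℤ} (hj : j ∈ digS m) (t : ℝ) :
    Phi P β m (j, t) = (β * Pv P j + t, Yv P j) := by
  unfold Phi
  have : (fun k => clampd m (j k)) = j := funext fun k => clampd_eq (hj k)
  rw [this]

lemma Knorm_eq_image (hP : (3:ℝ) ≤ P) (β : ℝ) :
    Knorm P β m = Phi P β m '' ((digS m) ×ˢ Set.Icc (-(1/2):ℝ) (1/2)) := by
  ext z
  constructor
  · rintro ⟨j, hj, hy, hx⟩
    refine ⟨(j, z.1 - β * Pv P j), ⟨hj, ?_⟩, ?_⟩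
    · rw [Set.mem_Icc]
      constructor <;> [linarith [abs_le.mp hx] ; linarith [(abs_le.mp hx).2]]
    · rw [Phi_eq hj]
      have he : β * Pv P j + (z.1 - β * Pv P j) = z.1 := by ring
      rw [he, ← hy]
  · rintro ⟨⟨j, t⟩, ⟨hj, ht⟩, rfl⟩
    rw [Phi_eq hj]
    refine ⟨j, hj, rfl, ?_⟩
    show |β * Pv P j + t - β * Pv P j| ≤ 1/2
    have he : β * Pv P j + t - β * Pv P j = t := by ring
    rw [he]
    rw [Set.mem_Icc] at ht
    rw [abs_le]; exact ⟨by linarith [ht.1], ht.2⟩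

lemma continuous_Phi (hP : (3:ℝ) ≤ P) (β : ℝ) (m : ℕ) : Continuous (Phi P β m) := by
  have hYc : Continuous fun (j : ℕ → ℤ) => Yv P (fun k => clampd m (j k)) := by
    unfold Yv
    apply continuous_tsum (u := fun k : ℕ => (P ^ (k+1))⁻¹ * (m:ℝ))
    · intro k
      have he : (fun (j : ℕ → ℤ) => (P ^ (k+1))⁻¹ * ((clampd m (j k) : ℤ) : ℝ))
          = (fun x : ℤ => (P ^ (k+1))⁻¹ * ((clampd m x : ℤ) : ℝ)) ∘ (fun j => j k) := rfl
      rw [he]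
      exact Continuous.comp continuous_of_discreteTopology (continuous_apply k)
    · exact (geom_summable (oneltP hP)).mul_right _
    · intro k j
      rw [Real.norm_eq_abs, abs_mul, abs_of_nonneg (by positivity : (0:ℝ) ≤ (P ^ (k+1))⁻¹)]
      apply mul_le_mul_of_nonneg_left _ (by positivity)
      rw [← Int.cast_abs]
      exact_mod_cast abs_clampd_le m (j k)
  have hPc : Continuous fun (j : ℕ → ℤ) => Pv P (fun k => clampd m (j k)) := by
    unfold Pv
    apply continuous_tsum (u := fun k : ℕ => (P ^ (k+1))⁻¹ * 1)
    · intro k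
      have he : (fun (j : ℕ → ℤ) => (P ^ (k+1))⁻¹ * (if Odd (clampd m (j k)) then (1:ℝ) else 0))
          = (fun x : ℤ => (P ^ (k+1))⁻¹ * (if Odd (clampd m x) then (1:ℝ) else 0)) ∘ (fun j => j k) := rfl
      rw [he]
      exact Continuous.comp continuous_of_discreteTopology (continuous_apply k)
    · exact (geom_summable (oneltP hP)).mul_right _
    · intro k j
      rw [Real.norm_eq_abs, abs_mul, abs_of_nonneg (by positivity : (0:ℝ) ≤ (P ^ (k+1))⁻¹)]
      apply mul_le_mul_of_nonneg_left _ (by positivity)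
      split <;> simp
  unfold Phi
  apply Continuous.prodMk
  · exact ((continuous_const.mul (hPc.comp continuous_fst)).add continuous_snd)
  · exact hYc.comp continuous_fst

lemma digS_compact (m : ℕ) : IsCompact (digS m) := by
  have : digS m = Set.pi Set.univ (fun _ : ℕ => Set.Icc (-(m:ℤ)) (m:ℤ)) := by
    ext j
    simp only [digS, Set.mem_setOf_eq, Set.mem_pi, Set.mem_univ, forall_true_left,
      Set.mem_Icc]
    constructor
    · intro h k; exact abs_le.mp (h k)
    · intro h k; exact abs_le.mpr (h k)
  rw [this]
  exact isCompact_univ_pi (fun _ => (Set.finite_Icc _ _).isCompact)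

lemma Knorm_compact (hP : (3:ℝ) ≤ P) (β : ℝ) (m : ℕ) : IsCompact (Knorm P β m) := by
  rw [Knorm_eq_image hP]
  exact ((digS_compact m).prod isCompact_Icc).image (continuous_Phi hP β m)

end machinery

/-! ### Sufficiency: `|β| ≤ P` implies connectedness -/

section reverse
variable {m : ℕ} {P β : ℝ}

/-- the horizontal unit segment attached to a digit sequence -/
def seg (P β : ℝ) (j : ℕ → ℤ) : Set (ℝ × ℝ) :=
  Set.Icc (β * Pv P j - 1/2) (β * Pv P j + 1/2) ×ˢ ({Yv P j} : Set ℝ)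

lemma mem_seg {j : ℕ → ℤ} {z : ℝ × ℝ} :
    z ∈ seg P β j ↔ |z.1 - β * Pv P j| ≤ 1/2 ∧ z.2 = Yv P j := by
  unfold seg
  rw [Set.mem_prod, Set.mem_Icc, Set.mem_singleton_iff, abs_le]
  constructor
  · rintro ⟨⟨h1, h2⟩, h3⟩; exact ⟨⟨by linarith, by linarith⟩, h3⟩
  · rintro ⟨⟨h1, h2⟩, h3⟩; exact ⟨⟨by linarith, by linarith⟩, h3⟩

lemma seg_subset_Knorm {j : ℕ → ℤ} (hj : j ∈ digS m) : seg P β j ⊆ Knorm P β m := by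
  intro z hz
  rw [mem_seg] at hz
  exact ⟨j, hj, hz.2, hz.1⟩

lemma seg_preconnected (j : ℕ → ℤ) : IsPreconnected (seg P β j) :=
  ((convex_Icc _ _).prod (convex_singleton _)).isPreconnected

lemma ctr_mem_seg (j : ℕ → ℤ) : (β * Pv P j, Yv P j) ∈ seg P β j := by
  rw [mem_seg]
  constructor
  · rw [show β * Pv P j - β * Pv P j = 0 by ring]
    simp
  · rfl

lemma Knorm_sub_segs {z : ℝ × ℝ} (hz : z ∈ Knorm P β m) :
    ∃ j ∈ digS m, z ∈ seg P β j := by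
  obtain ⟨j, hj, hy, hx⟩ := hz
  exact ⟨j, hj, mem_seg.mpr ⟨hx, hy⟩⟩

/-- the junction sequences -/
def jfun (w : ℕ → ℤ) (t : ℕ) (d e : ℤ) : ℕ → ℤ :=
  fun k => if k < t then w k else if k = t then d else e

lemma jfun_mem {w : ℕ → ℤ} (hw : w ∈ digS m) {d e : ℤ} (hd : |d| ≤ (m:ℤ))
    (he : |e| ≤ (m:ℤ)) (t : ℕ) : jfun w t d e ∈ digS m := by
  intro k
  unfold jfun
  split
  · exact hw k
  · split
    · exact hd
    · exact he

lemma jfun_eq_of_agree {w w' : ℕ → ℤ} (t : ℕ) (h : ∀ k < t, w k = w' k) (d e : ℤ) :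
    jfun w t d e = jfun w' t d e := by
  funext k
  unfold jfun
  split
  · exact h k (by assumption)
  · rfl

lemma jfun_agree (w : ℕ → ℤ) (t : ℕ) (d e e' : ℤ) :
    ∀ k < t + 1, jfun w t d e k = jfun w t d e' k := by
  intro k hk
  unfold jfun
  rcases lt_or_ge k t with h | h
  · simp [h]
  · have : k = t := by omega
    simp [this]

/-- head-tail decomposition of `Yv` over a junction sequence -/
lemma Yv_jfun (hP : (3:ℝ) ≤ P) {w : ℕ → ℤ} (hw : w ∈ digS m) {d e : ℤ}
    (hd : |d| ≤ (m:ℤ)) (he : |e| ≤ (m:ℤ)) (t : ℕ) :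
    Yv P (jfun w t d e) = (∑ k ∈ Finset.range t, (P ^ (k+1))⁻¹ * (w k : ℝ))
      + (P^(t+1))⁻¹ * (d : ℝ) + (P^(t+1))⁻¹ * ((e:ℝ) * (P-1)⁻¹) := by
  have hj := jfun_mem hw hd he t
  rw [Yv_split hP hj (t+1), Finset.sum_range_succ]
  have h1 : ∀ k ∈ Finset.range t, (P ^ (k+1))⁻¹ * ((jfun w t d e k : ℤ) : ℝ)
      = (P ^ (k+1))⁻¹ * (w k : ℝ) := by
    intro k hk
    rw [Finset.mem_range] at hk
    unfold jfun
    rw [if_pos hk]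
  rw [Finset.sum_congr rfl h1]
  have h2 : (jfun w t d e t : ℤ) = d := by unfold jfun; simp
  rw [h2]
  have h3 : (fun k => jfun w t d e (k + (t+1))) = (fun _ => e) := by
    funext k
    unfold jfun
    have c1 : ¬ (k + (t+1) < t) := by omega
    have c2 : ¬ (k + (t+1) = t) := by omega
    rw [if_neg c1, if_neg c2]
  rw [h3, Yv_const hP]

lemma Pv_jfun (hP : (3:ℝ) ≤ P) (w : ℕ → ℤ) (d e : ℤ) (t : ℕ) :
    Pv P (jfun w t d e) = (∑ k ∈ Finset.range t, (P ^ (k+1))⁻¹ *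
        (if Odd (w k) then (1:ℝ) else 0))
      + (P^(t+1))⁻¹ * (if Odd d then (1:ℝ) else 0)
      + (P^(t+1))⁻¹ * ((if Odd e then (1:ℝ) else 0) * (P-1)⁻¹) := by
  rw [Pv_split hP _ (t+1), Finset.sum_range_succ]
  have h1 : ∀ k ∈ Finset.range t, (P ^ (k+1))⁻¹ *
        (if Odd (jfun w t d e k) then (1:ℝ) else 0)
      = (P ^ (k+1))⁻¹ * (if Odd (w k) then (1:ℝ) else 0) := by
    intro k hk
    rw [Finset.mem_range] at hk
    unfold jfun
    rw [if_pos hk]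
  rw [Finset.sum_congr rfl h1]
  have h2 : (jfun w t d e t : ℤ) = d := by unfold jfun; simp
  rw [h2]
  have h3 : (fun k => jfun w t d e (k + (t+1))) = (fun _ => e) := by
    funext k
    unfold jfun
    have c1 : ¬ (k + (t+1) < t) := by omega
    have c2 : ¬ (k + (t+1) = t) := by omega
    rw [if_neg c1, if_neg c2]
  rw [h3, Pv_const hP]

lemma junction (hm : 1 ≤ m) (hPm : P = 2*(m:ℝ)+1) {w : ℕ → ℤ} (hw : w ∈ digS m)
    (t : ℕ) {d : ℤ} (hd1 : -(m:ℤ) ≤ d) (hd2 : d < (m:ℤ)) :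
    Yv P (jfun w t d (m:ℤ)) = Yv P (jfun w t (d+1) (-(m:ℤ))) ∧
    |Pv P (jfun w t d (m:ℤ)) - Pv P (jfun w t (d+1) (-(m:ℤ)))| ≤ (P^(t+1))⁻¹ := by
  have hm' : (1:ℝ) ≤ (m:ℝ) := by exact_mod_cast hm
  have hP : (3:ℝ) ≤ P := by rw [hPm]; linarith
  have hdm : |d| ≤ (m:ℤ) := by rw [abs_le]; omega
  have hdm1 : |d+1| ≤ (m:ℤ) := by rw [abs_le]; omega
  have hmm : |(m:ℤ)| ≤ (m:ℤ) := by rw [abs_le]; omega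
  have hmm' : |(-(m:ℤ))| ≤ (m:ℤ) := by rw [abs_le]; omega
  constructor
  · rw [Yv_jfun hP hw hdm hmm t, Yv_jfun hP hw hdm1 hmm' t]
    have hP1 : (P:ℝ) - 1 = 2*(m:ℝ) := by rw [hPm]; ring
    rw [hP1]
    have h2m : (2*(m:ℝ))⁻¹ ≠ 0 := by positivity
    push_cast
    have : (m:ℝ) * (2*(m:ℝ))⁻¹ = 1/2 := by
      field_simp
    rw [this]
    have : (-(m:ℝ)) * (2*(m:ℝ))⁻¹ = -(1/2) := by
      field_simp
    rw [this]
    ring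
  · rw [Pv_jfun hP w d (m:ℤ) t, Pv_jfun hP w (d+1) (-(m:ℤ)) t]
    have hodd : (Odd (-(m:ℤ))) ↔ Odd (m:ℤ) := by
      constructor
      · intro h; have := h.neg; rwa [neg_neg] at this
      · intro h; exact h.neg
    have heq : (if Odd (-(m:ℤ)) then (1:ℝ) else 0) = (if Odd (m:ℤ) then (1:ℝ) else 0) := by
      split <;> split <;> first | rfl | (exfalso; tauto)
    rw [heq]
    have hsimp : ∀ A B C D : ℝ, A + B + C - (A + D + C) = B - D := by intros; ring
    rw [hsimp]
    rw [← mul_sub]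
    rw [abs_mul, abs_of_nonneg (by positivity : (0:ℝ) ≤ (P^(t+1))⁻¹)]
    have hbound : |(if Odd d then (1:ℝ) else 0) - (if Odd (d+1) then (1:ℝ) else 0)| ≤ 1 := by
      split <;> split <;> norm_num
    nlinarith [hbound, inv_pos.mpr (show (0:ℝ) < P^(t+1) by positivity)]

/-- finite determination of clopen-type covers on the digit space -/
lemma finite_determination {W W' : Set (ℕ → ℤ)} (hW : IsOpen W) (hW' : IsOpen W')
    (hcov : digS m ⊆ W ∪ W') (hdisj : digS m ∩ W ∩ W' = ∅) :
    ∃ N : ℕ, ∀ j ∈ digS m, ∀ j' ∈ digS m, (∀ k, k < N → j k = j' k) → j ∈ W → j' ∈ W := by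
  classical
  set cylset : (ℕ → ℤ) → Finset ℕ → Set (ℕ → ℤ) :=
    fun j F => {g | ∀ a ∈ F, g a = j a} with hcylset
  have hcylopen : ∀ j F, IsOpen (cylset j F) := by
    intro j F
    have : cylset j F = Set.pi ↑F (fun a => {j a}) := by
      ext g
      simp [hcylset, Set.mem_pi]
    rw [this]
    exact isOpen_set_pi F.finite_toSet (fun a _ => isOpen_discrete _)
  have key : ∀ x : {j // j ∈ digS m}, ∃ F : Finset ℕ,
      (cylset x.1 F ⊆ W ∨ cylset x.1 F ⊆ W') := by
    rintro ⟨j, hj⟩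
    rcases hcov hj with hjW | hjW'
    · obtain ⟨I, u, hIu, hsub⟩ := isOpen_pi_iff.mp hW j hjW
      refine ⟨I, Or.inl ?_⟩
      intro g hg
      apply hsub
      intro a ha
      rw [hg a ha]
      exact (hIu a ha).2
    · obtain ⟨I, u, hIu, hsub⟩ := isOpen_pi_iff.mp hW' j hjW'
      refine ⟨I, Or.inr ?_⟩
      intro g hg
      apply hsub
      intro a ha
      rw [hg a ha]
      exact (hIu a ha).2
  choose F hF using key
  have hcover : digS m ⊆ ⋃ x : {j // j ∈ digS m}, cylset x.1 (F x) := by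
    intro j hj
    exact Set.mem_iUnion.mpr ⟨⟨j, hj⟩, fun a _ => rfl⟩
  obtain ⟨tt, htt⟩ := (digS_compact m).elim_finite_subcover
    (fun x : {j // j ∈ digS m} => cylset x.1 (F x)) (fun x => hcylopen _ _) hcover
  refine ⟨(tt.sup fun x => (F x).sup id) + 1, ?_⟩
  intro j hj j' hj' hagree hjW
  obtain ⟨x, hx, hjx⟩ := Set.mem_iUnion₂.mp (htt hj)
  have hFx : ∀ a ∈ F x, a < (tt.sup fun x => (F x).sup id) + 1 := by
    intro a ha
    have h1 : a ≤ (F x).sup id := Finset.le_sup (f := id) ha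
    have h2 : (F x).sup id ≤ tt.sup fun x => (F x).sup id :=
      Finset.le_sup (f := fun x => (F x).sup id) hx
    omega
  have hj'x : j' ∈ cylset x.1 (F x) := by
    intro a ha
    rw [← hagree a (hFx a ha)]
    exact hjx a ha
  rcases hF x with hsub | hsub
  · exact hsub hj'x
  · exfalso
    have : j ∈ W' := hsub hjx
    have : j ∈ digS m ∩ W ∩ W' := ⟨⟨hj, hjW⟩, this⟩
    rw [hdisj] at this
    exact this

end reverse

section mainrev
variable {m : ℕ} {P β : ℝ}

lemma Knorm_connected (hm : 1 ≤ m) (hPm : P = 2*(m:ℝ)+1) (hβ : |β| ≤ P) :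
    IsConnected (Knorm P β m) := by
  classical
  have hm' : (1:ℝ) ≤ (m:ℝ) := by exact_mod_cast hm
  have hP : (3:ℝ) ≤ P := by rw [hPm]; linarith
  have hmm : |(m:ℤ)| ≤ (m:ℤ) := by rw [abs_le]; omega
  have hmm' : |(-(m:ℤ))| ≤ (m:ℤ) := by rw [abs_le]; omega
  constructor
  · -- nonempty
    refine ⟨(β * Pv P (fun _ => 0), Yv P (fun _ => 0)), (fun _ => 0),
      (fun k => by simp), rfl, ?_⟩
    show |β * Pv P (fun _ => 0) - β * Pv P (fun _ => 0)| ≤ 1/2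
    rw [show β * Pv P (fun _ => 0) - β * Pv P (fun _ => 0) = 0 by ring]
    simp
  · intro u v hu hv hsuv hsu hsv
    by_contra hne
    rw [Set.not_nonempty_iff_eq_empty] at hne
    set ctr : (ℕ → ℤ) → ℝ × ℝ := fun j => Phi P β m (j, 0) with hctr
    have hctr_eq : ∀ j ∈ digS m, ctr j = (β * Pv P j, Yv P j) := by
      intro j hj
      rw [hctr]
      show Phi P β m (j, 0) = _
      rw [Phi_eq hj, add_zero]
    have hctr_seg : ∀ j ∈ digS m, ctr j ∈ seg P β j := by
      intro j hj
      rw [hctr_eq j hj]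
      exact ctr_mem_seg j
    have hctrK : ∀ j ∈ digS m, ctr j ∈ Knorm P β m := by
      intro j hj
      exact seg_subset_Knorm hj (hctr_seg j hj)
    have hctrcont : Continuous ctr :=
      (continuous_Phi hP β m).comp (continuous_id.prodMk continuous_const)
    set W : Set (ℕ → ℤ) := ctr ⁻¹' u with hWdef
    set W' : Set (ℕ → ℤ) := ctr ⁻¹' v with hWdef'
    have hWopen : IsOpen W := hu.preimage hctrcont
    have hWopen' : IsOpen W' := hv.preimage hctrcont
    have hcovW : digS m ⊆ W ∪ W' := by
      intro j hj
      rcases hsuv (hctrK j hj) with h | h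
      · exact Or.inl h
      · exact Or.inr h
    have hdisjW : digS m ∩ W ∩ W' = ∅ := by
      rw [Set.eq_empty_iff_forall_notMem]
      rintro j ⟨⟨hj, hjW⟩, hjW'⟩
      have : ctr j ∈ Knorm P β m ∩ (u ∩ v) := ⟨hctrK j hj, hjW, hjW'⟩
      rw [hne] at this
      exact this
    -- dichotomy of segments
    have hseg_or : ∀ j ∈ digS m, seg P β j ⊆ u ∨ seg P β j ⊆ v := by
      intro j hj
      by_cases h1 : (seg P β j ∩ u).Nonempty
      · by_cases h2 : (seg P β j ∩ v).Nonempty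
        · exfalso
          obtain ⟨z, hzs, hzuv⟩ := seg_preconnected (P := P) (β := β) j u v hu hv
            (fun z hz => hsuv (seg_subset_Knorm hj hz)) h1 h2
          have : z ∈ Knorm P β m ∩ (u ∩ v) := ⟨seg_subset_Knorm hj hzs, hzuv⟩
          rw [hne] at this
          exact this
        · left
          intro z hz
          rcases hsuv (seg_subset_Knorm hj hz) with h | h
          · exact h
          · exact absurd ⟨z, hz, h⟩ h2
      · right
        intro z hz
        rcases hsuv (seg_subset_Knorm hj hz) with h | h
        · exact absurd ⟨z, hz, h⟩ h1
        · exact h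
    have hWseg : ∀ j ∈ digS m, (j ∈ W ↔ seg P β j ⊆ u) := by
      intro j hj
      constructor
      · intro hjW
        rcases hseg_or j hj with h | h
        · exact h
        · exfalso
          have : ctr j ∈ Knorm P β m ∩ (u ∩ v) :=
            ⟨hctrK j hj, hjW, h (hctr_seg j hj)⟩
          rw [hne] at this
          exact this
      · intro h
        exact h (hctr_seg j hj)
    -- junction transfer
    have htrans : ∀ j j', j ∈ digS m → j' ∈ digS m → Yv P j = Yv P j' →
        |Pv P j - Pv P j'| ≤ P⁻¹ → (j ∈ W ↔ j' ∈ W) := by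
      intro j j' hj hj' hY hPd
      have hbb : |β| * |Pv P j - Pv P j'| ≤ 1 := by
        have := mul_le_mul hβ hPd (abs_nonneg _) (by linarith : (0:ℝ) ≤ P)
        rwa [mul_inv_cancel₀ (by linarith : P ≠ 0)] at this
      have hover : ((β * Pv P j + β * Pv P j')/2, Yv P j) ∈ seg P β j ∩ seg P β j' := by
        constructor <;> rw [mem_seg]
        · constructor
          · have he : (β * Pv P j + β * Pv P j')/2 - β * Pv P j
                = β * (Pv P j' - Pv P j) / 2 := by ring
            rw [he, abs_div, abs_mul]
            rw [abs_sub_comm] at hPd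
            have : |β| * |Pv P j' - Pv P j| ≤ 1 := by
              have := mul_le_mul hβ hPd (abs_nonneg _) (by linarith : (0:ℝ) ≤ P)
              rwa [mul_inv_cancel₀ (by linarith : P ≠ 0)] at this
            rw [show |(2:ℝ)| = 2 by norm_num]
            linarith
          · rfl
        · constructor
          · have he : (β * Pv P j + β * Pv P j')/2 - β * Pv P j'
                = β * (Pv P j - Pv P j') / 2 := by ring
            rw [he, abs_div, abs_mul]
            rw [show |(2:ℝ)| = 2 by norm_num]
            linarith
          · exact hY
      have key : ∀ a b : ℕ → ℤ, a ∈ digS m → b ∈ digS m →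
          (∃ z, z ∈ seg P β a ∩ seg P β b) → a ∈ W → b ∈ W := by
        rintro a b ha hb ⟨z, hza, hzb⟩ haW
        rcases hseg_or b hb with h | h
        · exact (hWseg b hb).mpr h
        · exfalso
          have : z ∈ Knorm P β m ∩ (u ∩ v) :=
            ⟨seg_subset_Knorm ha hza, (hWseg a ha).mp haW hza, h hzb⟩
          rw [hne] at this
          exact this
      constructor
      · exact key j j' hj hj' ⟨_, hover⟩
      · exact key j' j hj' hj ⟨_, hover.2, hover.1⟩
    obtain ⟨N, hN⟩ := finite_determination hWopen hWopen' hcovW hdisjW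
    -- the descent step
    have hstep : ∀ t : ℕ,
        (∀ j ∈ digS m, ∀ j' ∈ digS m, (∀ k, k < t+1 → j k = j' k) → (j ∈ W ↔ j' ∈ W)) →
        (∀ j ∈ digS m, ∀ j' ∈ digS m, (∀ k, k < t → j k = j' k) → (j ∈ W ↔ j' ∈ W)) := by
      intro t ih j hj j' hj' hagree
      have hPt : (P^(t+1))⁻¹ ≤ P⁻¹ := by
        apply inv_anti₀ (by linarith)
        calc P = P^1 := (pow_one P).symm
        _ ≤ P^(t+1) := pow_le_pow_right₀ (by linarith) (by omega)
      -- chain over the digit in position t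
      have hchain : ∀ dn : ℕ, dn ≤ 2*m →
          ((jfun j t (-(m:ℤ) + dn) (m:ℤ) ∈ W) ↔ (jfun j t (-(m:ℤ)) (m:ℤ) ∈ W)) := by
        intro dn hdn
        induction dn with
        | zero => simp
        | succ dn ihd =>
          have hdn' : dn ≤ 2*m := by omega
          have ih2 := ihd hdn'
          set d : ℤ := -(m:ℤ) + dn with hd
          have hd1 : -(m:ℤ) ≤ d := by omega
          have hd2 : d < (m:ℤ) := by
            have : (dn : ℤ) < 2*m := by exact_mod_cast (by omega : dn < 2*m)
            omega
          have hdb : |d| ≤ (m:ℤ) := by rw [abs_le]; omega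
          have hdb1 : |d+1| ≤ (m:ℤ) := by rw [abs_le]; omega
          obtain ⟨hYj, hPj⟩ := junction hm hPm hj t hd1 hd2
          have h1 : (jfun j t d (m:ℤ) ∈ W) ↔ (jfun j t (d+1) (-(m:ℤ)) ∈ W) :=
            htrans _ _ (jfun_mem hj hdb hmm t) (jfun_mem hj hdb1 hmm' t) hYj
              (le_trans hPj hPt)
          have h2 : (jfun j t (d+1) (-(m:ℤ)) ∈ W) ↔ (jfun j t (d+1) (m:ℤ) ∈ W) :=
            ih _ (jfun_mem hj hdb1 hmm' t) _ (jfun_mem hj hdb1 hmm t)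
              (jfun_agree j t (d+1) (-(m:ℤ)) (m:ℤ))
          have hcast : -(m:ℤ) + ((dn+1 : ℕ) : ℤ) = d + 1 := by push_cast; omega
          rw [hcast]
          exact (h2.symm.trans h1.symm).trans ih2
      have hjt : |j t| ≤ (m:ℤ) := hj t
      have hjt' : |j' t| ≤ (m:ℤ) := hj' t
      have hagree1 : ∀ (w : ℕ → ℤ), (∀ k, k < t+1 → w k = jfun w t (w t) (m:ℤ) k) := by
        intro w k hk
        unfold jfun
        rcases lt_or_ge k t with h | h
        · rw [if_pos h]
        · have : k = t := by omega
          rw [this]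
          simp
      have e1 : j ∈ W ↔ jfun j t (j t) (m:ℤ) ∈ W :=
        ih j hj _ (jfun_mem hj hjt hmm t) (hagree1 j)
      have e2 : j' ∈ W ↔ jfun j' t (j' t) (m:ℤ) ∈ W :=
        ih j' hj' _ (jfun_mem hj' hjt' hmm t) (hagree1 j')
      have e3 : jfun j' t (j' t) (m:ℤ) = jfun j t (j' t) (m:ℤ) :=
        jfun_eq_of_agree t (fun k hk => (hagree k hk).symm) _ _
      have c1 : ∀ (dd : ℤ), |dd| ≤ (m:ℤ) →
          ((jfun j t dd (m:ℤ) ∈ W) ↔ (jfun j t (-(m:ℤ)) (m:ℤ) ∈ W)) := by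
        intro dd hdd
        have h0 : (0:ℤ) ≤ dd + m := by rw [abs_le] at hdd; omega
        have hcast : -(m:ℤ) + ((dd + m).toNat : ℤ) = dd := by omega
        have hle : (dd + m).toNat ≤ 2*m := by rw [abs_le] at hdd; omega
        have := hchain (dd + m).toNat hle
        rwa [hcast] at this
      rw [e1, e2, e3]
      rw [c1 (j t) hjt, c1 (j' t) hjt']
    -- descent from N to 0
    have hCc : ∀ s : ℕ,
        (∀ j ∈ digS m, ∀ j' ∈ digS m, (∀ k, k < N - s → j k = j' k) → (j ∈ W ↔ j' ∈ W)) := by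
      intro s
      induction s with
      | zero =>
        intro j hj j' hj' hag
        simp only [Nat.sub_zero] at hag
        exact ⟨hN j hj j' hj' hag, hN j' hj' j hj (fun k hk => (hag k hk).symm)⟩
      | succ s ihs =>
        by_cases h : N - s = 0
        · intro j hj j' hj' hag
          exact ihs j hj j' hj' (fun k hk => absurd hk (by omega))
        · have he : N - s = (N - (s+1)) + 1 := by omega
          intro j hj j' hj' hag
          refine hstep (N - (s+1)) ?_ j hj j' hj' hag
          rw [← he]
          exact ihs
    have hC0 := hCc N
    obtain ⟨z0, hz0K, hz0u⟩ := hsu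
    obtain ⟨z1, hz1K, hz1v⟩ := hsv
    obtain ⟨j0, hj0, hz0s⟩ := Knorm_sub_segs hz0K
    obtain ⟨j1, hj1, hz1s⟩ := Knorm_sub_segs hz1K
    have hj0W : j0 ∈ W := by
      rcases hseg_or j0 hj0 with h | h
      · exact (hWseg j0 hj0).mpr h
      · exfalso
        have : z0 ∈ Knorm P β m ∩ (u ∩ v) := ⟨hz0K, hz0u, h hz0s⟩
        rw [hne] at this
        exact this
    have hj1W : j1 ∉ W := by
      intro hW1
      have hs1 := (hWseg j1 hj1).mp hW1
      have : z1 ∈ Knorm P β m ∩ (u ∩ v) := ⟨hz1K, hs1 hz1s, hz1v⟩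
      rw [hne] at this
      exact this
    exact hj1W ((hC0 j0 hj0 j1 hj1 (fun k hk => absurd hk (by omega))).mp hj0W)

end mainrev

/-! ### Necessity: `β > P` implies disconnectedness -/

section forward
variable {m : ℕ} {P β : ℝ}

lemma Yv_neg (hP : (3:ℝ) ≤ P) (g : ℕ → ℤ) :
    Yv P (fun k => -(g k)) = - Yv P g := by
  unfold Yv
  rw [← tsum_neg]
  apply tsum_congr
  intro k
  push_cast
  ring

lemma digS_neg {g : ℕ → ℤ} (hg : g ∈ digS m) : (fun k => -(g k)) ∈ digS m := by
  intro k
  rw [abs_neg]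
  exact hg k

lemma Yv_const_m (hm : 1 ≤ m) (hPm : P = 2*(m:ℝ)+1) :
    Yv P (fun _ => (m:ℤ)) = 1/2 := by
  have hm' : (1:ℝ) ≤ (m:ℝ) := by exact_mod_cast hm
  have hP : (3:ℝ) ≤ P := by rw [hPm]; linarith
  rw [Yv_const hP]
  push_cast
  rw [hPm]
  rw [show (2*(m:ℝ)+1-1) = 2*(m:ℝ) by ring]
  field_simp

/-- forcing lemma: if `Yv g` is within `(P^(L+1))⁻¹` of its maximum `1/2`,
then the first `L+1` digits are all `m`. -/
lemma half_force (hm : 1 ≤ m) (hPm : P = 2*(m:ℝ)+1) {g : ℕ → ℤ} (hg : g ∈ digS m)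
    (L : ℕ) (hY : 1/2 - Yv P g < (P^(L+1))⁻¹) :
    ∀ k, k ≤ L → g k = (m:ℤ) := by
  have hm' : (1:ℝ) ≤ (m:ℝ) := by exact_mod_cast hm
  have hP : (3:ℝ) ≤ P := by rw [hPm]; linarith
  intro k hk
  have hsg := summable_Yv (m := m) hP hg
  have hsm := summable_Yv (m := m) hP (j := fun _ => (m:ℤ))
    (fun _ => by show |(m:ℤ)| ≤ (m:ℤ); rw [abs_le]; omega)
  have hdiff : 1/2 - Yv P g = ∑' k : ℕ, (P^(k+1))⁻¹ * (((m:ℤ) - g k : ℤ) : ℝ) := by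
    rw [← Yv_const_m hm hPm]
    unfold Yv
    rw [← hsm.tsum_sub hsg]
    apply tsum_congr
    intro k'
    push_cast
    ring
  have hnn : ∀ k' : ℕ, 0 ≤ (P^(k'+1))⁻¹ * (((m:ℤ) - g k' : ℤ) : ℝ) := by
    intro k'
    apply mul_nonneg (by positivity)
    have := (abs_le.mp (hg k')).2
    push_cast
    have : ((g k' : ℤ) : ℝ) ≤ (m:ℝ) := by exact_mod_cast this
    linarith
  have hsd : Summable (fun k' : ℕ => (P^(k'+1))⁻¹ * (((m:ℤ) - g k' : ℤ) : ℝ)) := by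
    apply summable_digit (oneltP hP) (C := 2*(m:ℝ))
    intro k'
    rw [← Int.cast_abs]
    have : |(m:ℤ) - g k'| ≤ 2*(m:ℤ) := by
      have := abs_le.mp (hg k')
      rw [abs_le]
      omega
    exact_mod_cast this
  have hterm : (P^(k+1))⁻¹ * (((m:ℤ) - g k : ℤ) : ℝ) ≤ 1/2 - Yv P g := by
    rw [hdiff]
    exact hsd.le_tsum k (fun k' _ => hnn k')
  have hlt : (P^(k+1))⁻¹ * (((m:ℤ) - g k : ℤ) : ℝ) < (P^(L+1))⁻¹ := lt_of_le_of_lt hterm hY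
  -- deduce m - g k < P^{k+1} * (P^{L+1})⁻¹ ≤ 1
  have hpow : (P^(k+1)) ≤ (P^(L+1)) := pow_le_pow_right₀ (by linarith) (by omega)
  have hppos : (0:ℝ) < P^(k+1) := by positivity
  have hppos2 : (0:ℝ) < P^(L+1) := by positivity
  have h1 : (((m:ℤ) - g k : ℤ) : ℝ) < P^(k+1) * (P^(L+1))⁻¹ := by
    have := mul_lt_mul_of_pos_left hlt hppos
    rwa [← mul_assoc, mul_inv_cancel₀ (ne_of_gt hppos), one_mul] at this
  have h2 : P^(k+1) * (P^(L+1))⁻¹ ≤ 1 := by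
    rw [← div_eq_mul_inv, div_le_one hppos2]
    exact hpow
  have h3 : (((m:ℤ) - g k : ℤ) : ℝ) < 1 := lt_of_lt_of_le h1 h2
  have h4 : (m:ℤ) - g k < 1 := by exact_mod_cast h3
  have h5 := (abs_le.mp (hg k)).2
  omega

lemma half_force_neg (hm : 1 ≤ m) (hPm : P = 2*(m:ℝ)+1) {g : ℕ → ℤ} (hg : g ∈ digS m)
    (L : ℕ) (hY : Yv P g + 1/2 < (P^(L+1))⁻¹) :
    ∀ k, k ≤ L → g k = -(m:ℤ) := by
  have hP : (3:ℝ) ≤ P := by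
    have hm' : (1:ℝ) ≤ (m:ℝ) := by exact_mod_cast hm
    rw [hPm]; linarith
  intro k hk
  have hneg := half_force hm hPm (digS_neg hg) L (by
    rw [Yv_neg hP g]
    linarith) k hk
  have hneg' : -(g k) = (m:ℤ) := hneg
  omega

/-- comparison of `Pv` along sequences agreeing on an initial segment -/
lemma Pv_agree (hP : (3:ℝ) ≤ P) (j j' : ℕ → ℤ) (N : ℕ)
    (h : ∀ k, k < N → j k = j' k) : |Pv P j - Pv P j'| ≤ (P^N)⁻¹ := by
  rw [Pv_split hP j N, Pv_split hP j' N]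
  have hhead : (∑ k ∈ Finset.range N, (P ^ (k+1))⁻¹ * (if Odd (j k) then (1:ℝ) else 0))
      = (∑ k ∈ Finset.range N, (P ^ (k+1))⁻¹ * (if Odd (j' k) then (1:ℝ) else 0)) := by
    apply Finset.sum_congr rfl
    intro k hk
    rw [Finset.mem_range] at hk
    rw [h k hk]
  rw [hhead]
  have he : ∀ A B C : ℝ, A + B - (A + C) = B - C := by intros; ring
  rw [he]
  rw [← mul_sub, abs_mul, abs_of_nonneg (by positivity : (0:ℝ) ≤ (P^N)⁻¹)]
  have h1 : ∀ g : ℕ → ℤ, 0 ≤ Pv P (fun k => g (k + N)) ∧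
      Pv P (fun k => g (k + N)) ≤ (P-1)⁻¹ :=
    fun g => ⟨Pv_nonneg hP _, Pv_le hP _⟩
  have hb : |Pv P (fun k => j (k + N)) - Pv P (fun k => j' (k + N))| ≤ (P-1)⁻¹ := by
    obtain ⟨h1j, h2j⟩ := h1 j
    obtain ⟨h1j', h2j'⟩ := h1 j'
    rw [abs_le]
    constructor <;> linarith
  have hP1 : (P-1)⁻¹ ≤ 1 := by
    rw [inv_le_one_iff₀]; right; linarith
  nlinarith [inv_pos.mpr (show (0:ℝ) < P^N by positivity), abs_nonneg
    (Pv P (fun k => j (k + N)) - Pv P (fun k => j' (k + N)))]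

/-- the two junction sequences at the critical height -/
def jstar (m : ℕ) : ℕ → ℤ := jfun (fun _ => 0) 0 0 (m:ℤ)
def jstar2 (m : ℕ) : ℕ → ℤ := jfun (fun _ => 0) 0 1 (-(m:ℤ))

lemma jstar_apply (m : ℕ) (k : ℕ) : jstar m k = if k = 0 then 0 else (m:ℤ) := by
  unfold jstar jfun
  simp

lemma jstar2_apply (m : ℕ) (k : ℕ) : jstar2 m k = if k = 0 then 1 else -(m:ℤ) := by
  unfold jstar2 jfun
  simp

lemma jstar_mem (hm : 1 ≤ m) : jstar m ∈ digS m := by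
  intro k
  rw [jstar_apply]
  split <;> rw [abs_le] <;> omega

lemma jstar2_mem (hm : 1 ≤ m) : jstar2 m ∈ digS m := by
  intro k
  rw [jstar2_apply]
  split <;> rw [abs_le] <;> omega

lemma zero_mem_digS : (fun _ : ℕ => (0:ℤ)) ∈ digS m := by
  intro k; simp

lemma Yv_jstar (hm : 1 ≤ m) (hPm : P = 2*(m:ℝ)+1) :
    Yv P (jstar m) = P⁻¹ * (1/2) := by
  have hm' : (1:ℝ) ≤ (m:ℝ) := by exact_mod_cast hm
  have hP : (3:ℝ) ≤ P := by rw [hPm]; linarith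
  have hb0 : |(0:ℤ)| ≤ (m:ℤ) := by simp
  have hbm : |(m:ℤ)| ≤ (m:ℤ) := by rw [abs_le]; omega
  unfold jstar
  rw [Yv_jfun hP zero_mem_digS hb0 hbm 0]
  simp only [Finset.range_zero, Finset.sum_empty, Int.cast_zero, Int.cast_natCast]
  rw [pow_one]
  have : (m:ℝ) * (P-1)⁻¹ = 1/2 := by
    rw [hPm, show (2*(m:ℝ)+1-1) = 2*(m:ℝ) by ring]
    field_simp
  rw [this]
  ring

lemma Yv_jstar2 (hm : 1 ≤ m) (hPm : P = 2*(m:ℝ)+1) :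
    Yv P (jstar2 m) = P⁻¹ * (1/2) := by
  have hm' : (1:ℝ) ≤ (m:ℝ) := by exact_mod_cast hm
  have hP : (3:ℝ) ≤ P := by rw [hPm]; linarith
  have hb1 : |(1:ℤ)| ≤ (m:ℤ) := by rw [abs_le]; omega
  have hbm : |(-(m:ℤ))| ≤ (m:ℤ) := by rw [abs_le]; omega
  unfold jstar2
  rw [Yv_jfun hP zero_mem_digS hb1 hbm 0]
  simp only [Finset.range_zero, Finset.sum_empty, Int.cast_one, Int.cast_neg,
    Int.cast_natCast]
  rw [pow_one]
  have : (-(m:ℝ)) * (P-1)⁻¹ = -(1/2) := by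
    rw [hPm, show (2*(m:ℝ)+1-1) = 2*(m:ℝ) by ring]
    field_simp
  rw [this]
  ring

lemma Pv_jstar2_sub (hm : 1 ≤ m) (hPm : P = 2*(m:ℝ)+1) :
    Pv P (jstar2 m) = Pv P (jstar m) + P⁻¹ := by
  have hm' : (1:ℝ) ≤ (m:ℝ) := by exact_mod_cast hm
  have hP : (3:ℝ) ≤ P := by rw [hPm]; linarith
  unfold jstar jstar2
  rw [Pv_jfun hP _ _ _ 0, Pv_jfun hP _ _ _ 0]
  simp only [Finset.range_zero, Finset.sum_empty, pow_one]
  have h0 : ¬ Odd (0:ℤ) := by decide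
  have h1 : Odd (1:ℤ) := ⟨0, by ring⟩
  have hodd : (if Odd (-(m:ℤ)) then (1:ℝ) else 0) = (if Odd (m:ℤ) then (1:ℝ) else 0) := by
    have : Odd (-(m:ℤ)) ↔ Odd (m:ℤ) := ⟨fun h => by have := h.neg; rwa [neg_neg] at this,
      fun h => h.neg⟩
    split <;> split <;> first | rfl | (exfalso; tauto)
  rw [if_pos h1, if_neg h0, hodd]
  ring

end forward

section forward2
variable {m : ℕ} {P β : ℝ}

lemma tail_mem_digS {j : ℕ → ℤ} (hj : j ∈ digS m) (N : ℕ) :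
    (fun k => j (k + N)) ∈ digS m := fun k => hj (k + N)

lemma ctr_mem_Knorm (β : ℝ) {j : ℕ → ℤ} (hj : j ∈ digS m) :
    (β * Pv P j, Yv P j) ∈ Knorm P β m := by
  refine ⟨j, hj, rfl, ?_⟩
  show |β * Pv P j - β * Pv P j| ≤ 1/2
  rw [sub_self]
  simp

lemma Yv_zero_seq (hP : (3:ℝ) ≤ P) : Yv P (fun _ => (0:ℤ)) = 0 := by
  rw [Yv_const hP]
  simp

/-- classification of digit sequences near the junction height -/
lemma junction_classify (hm : 1 ≤ m) (hPm : P = 2*(m:ℝ)+1) {j : ℕ → ℤ}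
    (hj : j ∈ digS m) (K : ℕ)
    (hY : |Yv P j - P⁻¹ * (1/2)| < (P^(K+2))⁻¹) :
    (j 0 = 0 ∧ Yv P j ≤ P⁻¹ * (1/2) ∧ |Pv P j - Pv P (jstar m)| ≤ (P^(K+2))⁻¹) ∨
    (j 0 = 1 ∧ P⁻¹ * (1/2) ≤ Yv P j ∧ |Pv P j - Pv P (jstar2 m)| ≤ (P^(K+2))⁻¹) := by
  have hm' : (1:ℝ) ≤ (m:ℝ) := by exact_mod_cast hm
  have hP : (3:ℝ) ≤ P := by rw [hPm]; linarith
  have hP0 : (0:ℝ) < P := by linarith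
  set T := Yv P (fun k => j (k + 1)) with hTdef
  have hT : |T| ≤ 1/2 := abs_Yv_le hm hPm (tail_mem_digS hj 1)
  have hsplit : Yv P j = P⁻¹ * ((j 0 : ℝ) + T) := by
    rw [Yv_split hP hj 1]
    simp only [Finset.sum_range_one, pow_one]
    ring
  have hPd : P * (P^(K+2))⁻¹ = (P^(K+1))⁻¹ := by
    rw [show K+2 = (K+1)+1 by ring, pow_succ]
    field_simp
  have hd3 : (P^(K+1))⁻¹ ≤ 1/3 := by
    rw [show (1:ℝ)/3 = (3:ℝ)⁻¹ by norm_num]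
    apply inv_anti₀ (by norm_num)
    calc (3:ℝ) ≤ P := hP
    _ = P^1 := (pow_one P).symm
    _ ≤ P^(K+1) := pow_le_pow_right₀ (by linarith) (by omega)
  have hYj : |(j 0 : ℝ) + T - 1/2| < (P^(K+1))⁻¹ := by
    have h2 : (j 0 : ℝ) + T - 1/2 = (Yv P j - P⁻¹ * (1/2)) * P := by
      rw [hsplit]
      field_simp
    rw [h2, abs_mul, abs_of_pos hP0]
    calc |Yv P j - P⁻¹ * (1/2)| * P < (P^(K+2))⁻¹ * P :=
        mul_lt_mul_of_pos_right hY hP0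
    _ = (P^(K+1))⁻¹ := by rw [mul_comm]; exact hPd
  obtain ⟨hY1, hY2⟩ := abs_lt.mp hYj
  obtain ⟨hT1, hT2⟩ := abs_le.mp hT
  have hj0low : (0:ℤ) ≤ j 0 := by
    have : (-1 : ℝ) < (j 0 : ℝ) := by linarith
    have : (-1 : ℤ) < j 0 := by exact_mod_cast this
    omega
  have hj0high : j 0 ≤ 1 := by
    have : (j 0 : ℝ) < 2 := by linarith
    have : j 0 < 2 := by exact_mod_cast this
    omega
  have hcase : j 0 = 0 ∨ j 0 = 1 := by omega
  rcases hcase with h | h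
  · -- j 0 = 0
    left
    rw [h] at hsplit
    rw [show ((0:ℤ):ℝ) = (0:ℝ) by norm_num, zero_add] at hsplit
    refine ⟨h, ?_, ?_⟩
    · rw [hsplit]
      have : T ≤ 1/2 := hT2
      nlinarith [inv_pos.mpr hP0]
    · -- forcing
      have hforce : ∀ k, k ≤ K → j (k + 1) = (m:ℤ) := by
        apply half_force hm hPm (tail_mem_digS hj 1) K
        have hj00 : ((j 0 : ℤ) : ℝ) = 0 := by rw [h]; norm_num
        linarith [hTdef]
      apply Pv_agree hP j (jstar m) (K+2)
      intro k hk
      rw [jstar_apply]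
      rcases Nat.eq_zero_or_pos k with hk0 | hk0
      · rw [hk0, if_pos rfl, h]
      · rw [if_neg (by omega)]
        have : k - 1 + 1 = k := by omega
        rw [← this]
        exact hforce (k-1) (by omega)
  · -- j 0 = 1
    right
    rw [h] at hsplit
    rw [show ((1:ℤ):ℝ) = (1:ℝ) by norm_num] at hsplit
    refine ⟨h, ?_, ?_⟩
    · rw [hsplit]
      have : -(1/2) ≤ T := hT1
      nlinarith [inv_pos.mpr hP0]
    · have hforce : ∀ k, k ≤ K → j (k + 1) = -(m:ℤ) := by
        apply half_force_neg hm hPm (tail_mem_digS hj 1) K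
        have hj01 : ((j 0 : ℤ) : ℝ) = 1 := by rw [h]; norm_num
        linarith [hTdef]
      apply Pv_agree hP j (jstar2 m) (K+2)
      intro k hk
      rw [jstar2_apply]
      rcases Nat.eq_zero_or_pos k with hk0 | hk0
      · rw [hk0, if_pos rfl, h]
      · rw [if_neg (by omega)]
        have : k - 1 + 1 = k := by omega
        rw [← this]
        exact hforce (k-1) (by omega)

/-- the disconnection result -/
lemma Knorm_not_preconnected (hm : 1 ≤ m) (hPm : P = 2*(m:ℝ)+1) (hβ : P < β) :
    ¬ IsPreconnected (Knorm P β m) := by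
  intro hpc
  have hm' : (1:ℝ) ≤ (m:ℝ) := by exact_mod_cast hm
  have hP : (3:ℝ) ≤ P := by rw [hPm]; linarith
  have hP0 : (0:ℝ) < P := by linarith
  have hβ0 : (0:ℝ) < β := by linarith
  set s0 : ℝ := P⁻¹ * (1/2) with hs0def
  set pm : ℝ := Pv P (jstar m) with hpmdef
  have hpm2 : Pv P (jstar2 m) = pm + P⁻¹ := Pv_jstar2_sub hm hPm
  set gp : ℝ := β * P⁻¹ - 1 with hgpdef
  have hgpos : 0 < gp := by
    rw [hgpdef]
    have : P * P⁻¹ < β * P⁻¹ := mul_lt_mul_of_pos_right hβ (inv_pos.mpr hP0)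
    rw [mul_inv_cancel₀ (ne_of_gt hP0)] at this
    linarith
  -- choose K
  obtain ⟨n, hn⟩ := exists_pow_lt_of_lt_one (show (0:ℝ) < gp/(2*β) by positivity)
    (show P⁻¹ < 1 by rw [inv_lt_one_iff₀]; right; linarith)
  set K := n with hKdef
  have hK : β * (P^(K+2))⁻¹ < gp/2 := by
    have h1 : (P^(K+2))⁻¹ ≤ (P⁻¹)^n := by
      rw [← inv_pow]
      apply pow_le_pow_of_le_one (by positivity) (by
        rw [inv_le_one_iff₀]; right; linarith) (by omega)
    have h2 : β * (P^(K+2))⁻¹ ≤ β * (P⁻¹)^n := mul_le_mul_of_nonneg_left h1 (le_of_lt hβ0)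
    have h3 : β * (P⁻¹)^n < β * (gp/(2*β)) := mul_lt_mul_of_pos_left hn hβ0
    have h4 : β * (gp/(2*β)) = gp/2 := by field_simp
    linarith
  set δ : ℝ := (P^(K+2))⁻¹ with hδdef
  have hδpos : 0 < δ := by rw [hδdef]; positivity
  set c : ℝ := β * pm + 1/2 + gp/2 with hcdef
  -- the two open sets
  set U : Set (ℝ×ℝ) := {z | z.2 < s0} ∪ {z | z.2 < s0 + δ ∧ z.1 < c} with hUdef
  set V : Set (ℝ×ℝ) := {z | s0 < z.2} ∪ {z | s0 - δ < z.2 ∧ c < z.1} with hVdef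
  have hUo : IsOpen U := by
    apply IsOpen.union
    · exact isOpen_lt continuous_snd continuous_const
    · exact (isOpen_lt continuous_snd continuous_const).inter
        (isOpen_lt continuous_fst continuous_const)
  have hVo : IsOpen V := by
    apply IsOpen.union
    · exact isOpen_lt continuous_const continuous_snd
    · exact (isOpen_lt continuous_const continuous_snd).inter
        (isOpen_lt continuous_const continuous_fst)
  -- estimates from classification
  have hlow : ∀ x Pvj : ℝ, |Pvj - pm| ≤ δ → x ≤ β * Pvj + 1/2 → x < c := by
    intro x Pvj hPvj hx
    have h1 : Pvj ≤ pm + δ := by linarith [(abs_le.mp hPvj).2]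
    have h2 : β * Pvj ≤ β * (pm + δ) := mul_le_mul_of_nonneg_left h1 (le_of_lt hβ0)
    have h3 : β * (pm + δ) = β * pm + β * δ := by ring
    rw [hcdef]
    have : β * δ < gp/2 := hK
    nlinarith
  have hhigh : ∀ x Pvj : ℝ, |Pvj - (pm + P⁻¹)| ≤ δ → β * Pvj - 1/2 ≤ x → c < x := by
    intro x Pvj hPvj hx
    have h1 : pm + P⁻¹ - δ ≤ Pvj := by linarith [(abs_le.mp hPvj).1]
    have h2 : β * (pm + P⁻¹ - δ) ≤ β * Pvj := mul_le_mul_of_nonneg_left h1 (le_of_lt hβ0)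
    have h3 : β * P⁻¹ = 1 + gp := by rw [hgpdef]; ring
    have h4 : β * δ < gp/2 := hK
    rw [hcdef]
    nlinarith
  -- cover
  have hcov : Knorm P β m ⊆ U ∪ V := by
    rintro z ⟨j, hj, hy, hx⟩
    rcases lt_trichotomy z.2 s0 with h | h | h
    · exact Or.inl (Or.inl h)
    · -- z.2 = s0
      have hcl := junction_classify hm hPm hj K (by
        rw [← hy, h]
        rw [show s0 - s0 = 0 by ring]
        simpa using (show (0:ℝ) < (P^(K+2))⁻¹ by positivity))
      rcases hcl with ⟨h0, hsign, hnear⟩ | ⟨h0, hsign, hnear⟩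
      · refine Or.inl (Or.inr ⟨by linarith, ?_⟩)
        have hx1 : z.1 ≤ β * Pv P j + 1/2 := by linarith [(abs_le.mp hx).2]
        apply hlow z.1 (Pv P j) ?_ hx1
        rw [hδdef, hpmdef]
        exact hnear
      · refine Or.inr (Or.inr ⟨by linarith, ?_⟩)
        have hx1 : β * Pv P j - 1/2 ≤ z.1 := by linarith [(abs_le.mp hx).1]
        apply hhigh z.1 (Pv P j) ?_ hx1
        rw [hδdef, ← hpm2]
        exact hnear
    · exact Or.inr (Or.inl h)
  -- nonempty intersections
  have hmeetU : (Knorm P β m ∩ U).Nonempty := by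
    refine ⟨(β * Pv P (fun _ => (0:ℤ)), Yv P (fun _ => (0:ℤ))),
      ctr_mem_Knorm β zero_mem_digS, Or.inl ?_⟩
    show Yv P (fun _ => (0:ℤ)) < s0
    rw [Yv_zero_seq hP, hs0def]
    positivity
  have hmeetV : (Knorm P β m ∩ V).Nonempty := by
    have hmem : (fun _ : ℕ => (m:ℤ)) ∈ digS m := by
      intro k
      show |(m:ℤ)| ≤ (m:ℤ)
      rw [abs_le]; omega
    refine ⟨(β * Pv P (fun _ => (m:ℤ)), Yv P (fun _ => (m:ℤ))),
      ctr_mem_Knorm β hmem, Or.inl ?_⟩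
    show s0 < Yv P (fun _ => (m:ℤ))
    rw [Yv_const_m hm hPm, hs0def]
    have : P⁻¹ < 1 := by rw [inv_lt_one_iff₀]; right; linarith
    nlinarith
  -- contradiction
  obtain ⟨z, hzK, hzU, hzV⟩ := hpc U V hUo hVo hcov
    (by obtain ⟨z, h1, h2⟩ := hmeetU; exact ⟨z, h1, h2⟩)
    (by obtain ⟨z, h1, h2⟩ := hmeetV; exact ⟨z, h1, h2⟩)
  obtain ⟨j, hj, hy, hx⟩ := hzK
  have hzU' : z.2 < s0 ∨ (z.2 < s0 + δ ∧ z.1 < c) := hzU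
  have hzV' : s0 < z.2 ∨ (s0 - δ < z.2 ∧ c < z.1) := hzV
  rcases hzU' with h2 | ⟨h2a, h2b⟩ <;> rcases hzV' with h3 | ⟨h3a, h3b⟩
  · linarith
  · -- z.2 < s0, s0 - δ < z.2, c < z.1
    have hcl := junction_classify hm hPm hj K (by
      rw [← hy]
      rw [abs_lt]
      constructor <;> linarith [hs0def, hδdef])
    rcases hcl with ⟨h0, hsign, hnear⟩ | ⟨h0, hsign, hnear⟩
    · have hx1 : z.1 ≤ β * Pv P j + 1/2 := by linarith [(abs_le.mp hx).2]
      have := hlow z.1 (Pv P j) (by rw [hδdef, hpmdef]; exact hnear) hx1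
      linarith
    · rw [hy] at h2
      linarith [hs0def]
  · -- s0 < z.2, z.2 < s0 + δ, z.1 < c
    have hcl := junction_classify hm hPm hj K (by
      rw [← hy]
      rw [abs_lt]
      constructor <;> linarith [hs0def, hδdef])
    rcases hcl with ⟨h0, hsign, hnear⟩ | ⟨h0, hsign, hnear⟩
    · rw [hy] at h3
      linarith [hs0def]
    · have hx1 : β * Pv P j - 1/2 ≤ z.1 := by linarith [(abs_le.mp hx).1]
      have := hhigh z.1 (Pv P j) (by rw [hδdef, ← hpm2]; exact hnear) hx1
      linarith
  · linarith

end forward2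

/-! ### Assembly -/

section assembly
variable {m : ℕ} {P β : ℝ}

lemma Knorm_neg (P β : ℝ) (m : ℕ) :
    Knorm P β m = (fun z : ℝ × ℝ => (-z.1, z.2)) '' Knorm P (-β) m := by
  ext z
  constructor
  · rintro ⟨j, hj, hy, hx⟩
    refine ⟨(-z.1, z.2), ⟨j, hj, hy, ?_⟩, by simp⟩
    show |(-z.1) - (-β) * Pv P j| ≤ 1/2
    rw [show -z.1 - (-β) * Pv P j = -(z.1 - β * Pv P j) by ring, abs_neg]
    exact hx
  · rintro ⟨w, ⟨j, hj, hy, hx⟩, rfl⟩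
    refine ⟨j, hj, hy, ?_⟩
    show |(-w.1) - β * Pv P j| ≤ 1/2
    rw [show -w.1 - β * Pv P j = -(w.1 - (-β) * Pv P j) by ring, abs_neg]
    exact hx

lemma Knorm_conn_iff (hm : 1 ≤ m) (hPm : P = 2*(m:ℝ)+1) :
    IsConnected (Knorm P β m) ↔ |β| ≤ P := by
  have hm' : (1:ℝ) ≤ (m:ℝ) := by exact_mod_cast hm
  have hP : (3:ℝ) ≤ P := by rw [hPm]; linarith
  constructor
  · intro hconn
    by_contra hgt
    push_neg at hgt
    rcases le_or_gt 0 β with hb | hb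
    · rw [abs_of_nonneg hb] at hgt
      exact Knorm_not_preconnected hm hPm hgt hconn.isPreconnected
    · rw [abs_of_neg hb] at hgt
      have h2 : IsConnected (Knorm P (-β) m) := by
        rw [Knorm_neg P (-β) m, neg_neg]
        exact hconn.image _ ((continuous_fst.neg).prodMk continuous_snd).continuousOn
      exact Knorm_not_preconnected hm hPm hgt h2.isPreconnected
  · exact Knorm_connected hm hPm

lemma Kset_eq_image (hm : 1 ≤ m) (hP : (3:ℝ) ≤ P) (ε : ℝ) (n : ℕ) :
    Kset P m ε n = (fun w : ℝ × ℝ => (w.1, w.2 / P^n)) '' Knorm P (ε / P^n) m := by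
  have hpn : (0:ℝ) < P^n := by positivity
  ext z
  constructor
  · rintro ⟨j, hj, hy, hx⟩
    refine ⟨(z.1, z.2 * P^n), ⟨j, hj, hy, ?_⟩, ?_⟩
    · show |z.1 - (ε / P^n) * Pv P j| ≤ 1/2
      rw [abs_le] at hx ⊢
      constructor
      · have h1 : z.1 - (ε / P^n) * Pv P j = (z.1 * P^n - ε * Pv P j) / P^n := by
          field_simp
        rw [h1]
        rw [le_div_iff₀ hpn]
        nlinarith [hx.1]
      · have h1 : z.1 - (ε / P^n) * Pv P j = (z.1 * P^n - ε * Pv P j) / P^n := by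
          field_simp
        rw [h1, div_le_iff₀ hpn]
        nlinarith [hx.2]
    · show (z.1, z.2 * P^n / P^n) = z
      rw [mul_div_cancel_right₀ _ (ne_of_gt hpn)]
  · rintro ⟨w, ⟨j, hj, hy, hx⟩, rfl⟩
    refine ⟨j, hj, ?_, ?_⟩
    · show w.2 / P^n * P^n = Yv P j
      rw [div_mul_cancel₀ _ (ne_of_gt hpn)]
      exact hy
    · show |w.1 * P^n - ε * Pv P j| ≤ P^n / 2
      rw [abs_le] at hx ⊢
      have h1 : w.1 * P^n - ε * Pv P j = (w.1 - (ε / P^n) * Pv P j) * P^n := by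
        field_simp
      rw [h1]
      constructor <;> nlinarith [hx.1, hx.2]

lemma Knorm_eq_image_Kset (hm : 1 ≤ m) (hP : (3:ℝ) ≤ P) (ε : ℝ) (n : ℕ) :
    Knorm P (ε / P^n) m = (fun w : ℝ × ℝ => (w.1, w.2 * P^n)) '' Kset P m ε n := by
  have hpn : (0:ℝ) < P^n := by positivity
  rw [Kset_eq_image hm hP ε n]
  rw [Set.image_image]
  have : (fun w : ℝ × ℝ => ((w.1, w.2 / P^n).1, (w.1, w.2 / P^n).2 * P^n)) = id := by
    funext w
    show (w.1, w.2 / P^n * P^n) = w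
    rw [div_mul_cancel₀ _ (ne_of_gt hpn)]
  rw [this, Set.image_id]

lemma Kset_conn_iff (hm : 1 ≤ m) (hPm : P = 2*(m:ℝ)+1) (ε : ℝ) (n : ℕ) :
    IsConnected (Kset P m ε n) ↔ |ε| ≤ P^(n+1) := by
  have hm' : (1:ℝ) ≤ (m:ℝ) := by exact_mod_cast hm
  have hP : (3:ℝ) ≤ P := by rw [hPm]; linarith
  have hpn : (0:ℝ) < P^n := by positivity
  have hiff : IsConnected (Kset P m ε n) ↔ IsConnected (Knorm P (ε / P^n) m) := by
    constructor
    · intro h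
      rw [Knorm_eq_image_Kset hm hP ε n]
      exact h.image _ (continuous_fst.prodMk (continuous_snd.mul continuous_const)).continuousOn
    · intro h
      rw [Kset_eq_image hm hP ε n]
      exact h.image _ (continuous_fst.prodMk (continuous_snd.div_const _)).continuousOn
  rw [hiff, Knorm_conn_iff hm hPm]
  rw [abs_div, abs_of_pos hpn, div_le_iff₀ hpn]
  rw [show P * P^n = P^(n+1) by rw [pow_succ]; ring]

end assembly

/-- `G₀ = G_{0ⁿ}` is connected if and only if `|ε| ≤ p^(n+1)`. -/
theorem stmt11 (m : ℕ) (hm : 1 ≤ m) (p : ℤ) (hp : p = 2 * (m : ℤ) + 1) (ε : ℝ)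
    (n : ℕ) (hn : 1 ≤ n) :
    IsConnected (Gset p m ε (List.replicate n 0)) ↔ |ε| ≤ (p : ℝ) ^ (n + 1) := by
  rw [Gset_eq_Kset hm hp n]
  exact Kset_conn_iff hm (Pcast hm hp) ε n
end gsets
end
end

section
/- For every t ∈ D_{ε,∞} and every d ∈ D_ε, the point p·t + d belongs to D_{ε,∞}, and p·(T_ε + t) = ⋃_{d ∈ D_ε} (T_ε + p·t + d), where p·S = {p z : z ∈ S}. In other words, the tiling T_ε + D_{ε,∞} is self-replicating with respect to multiplication by p. -/
noncomputable section

/-- The digit set `D_ε = {(i + b_j, j) : i, j ∈ {-m, …, m}}`. -/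
def Ddig (m : ℕ) (ε : ℝ) : Set (ℝ × ℝ) :=
  {d | ∃ i j : ℤ, |i| ≤ (m : ℤ) ∧ |j| ≤ (m : ℤ) ∧ d = ((i : ℝ) + bshift ε j, (j : ℝ))}

/-- `D_{ε,∞} = {∑_{j=0}^{k-1} p^j d_j : k ≥ 1, d_0, …, d_{k-1} ∈ D_ε}`. -/
def Dinf (p : ℤ) (m : ℕ) (ε : ℝ) : Set (ℝ × ℝ) :=
  {x | ∃ k : ℕ, 1 ≤ k ∧ ∃ d : ℕ → ℝ × ℝ, (∀ l, l < k → d l ∈ Ddig m ε) ∧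
      x = ∑ l ∈ Finset.range k, (p : ℝ) ^ l • d l}

open Pointwise

lemma abs_bshift_le (ε : ℝ) (j : ℤ) : |bshift ε j| ≤ |ε| := by
  unfold bshift; split <;> simp

lemma summable_aux {p : ℝ} (hp : 1 < |p|) (a : ℕ → ℝ) (C : ℝ)
    (hC : ∀ k, |a k| ≤ C) : Summable (fun k => (p ^ k)⁻¹ * a k) := by
  have hr : |p|⁻¹ < 1 := inv_lt_one_of_one_lt₀ hp
  have hg : Summable (fun k : ℕ => C * |p|⁻¹ ^ k) :=
    (summable_geometric_of_lt_one (by positivity) hr).mul_left C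
  refine hg.of_norm_bounded (fun k => ?_)
  have h1 : ‖(p ^ k)⁻¹ * a k‖ = |p|⁻¹ ^ k * |a k| := by
    rw [Real.norm_eq_abs, abs_mul, abs_inv, abs_pow, inv_pow]
  rw [h1]
  have h2 : (0:ℝ) ≤ |p|⁻¹ ^ k := by positivity
  nlinarith [abs_nonneg (a k), hC k]

lemma key {p : ℝ} (hp : 1 < |p|) (a : ℕ → ℝ) (C : ℝ) (hC : ∀ k, |a k| ≤ C) :
    p * ∑' k : ℕ, (p ^ (k+1))⁻¹ * a k = a 0 + ∑' k : ℕ, (p ^ (k+1))⁻¹ * a (k+1) := by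
  have hp0 : p ≠ 0 := by
    intro h; rw [h] at hp; simp at hp; linarith
  have hsum : Summable (fun k => (p ^ k)⁻¹ * a k) := summable_aux hp a C hC
  have h1 : ∀ k : ℕ, p * ((p ^ (k+1))⁻¹ * a k) = (p ^ k)⁻¹ * a k := by
    intro k
    rw [pow_succ]
    field_simp
  calc p * ∑' k : ℕ, (p ^ (k+1))⁻¹ * a k
      = ∑' k : ℕ, p * ((p ^ (k+1))⁻¹ * a k) := (tsum_mul_left).symm
    _ = ∑' k : ℕ, (p ^ k)⁻¹ * a k := by simp only [h1]
    _ = (p ^ 0)⁻¹ * a 0 + ∑' k : ℕ, (p ^ (k+1))⁻¹ * a (k+1) := hsum.tsum_eq_zero_add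
    _ = a 0 + ∑' k : ℕ, (p ^ (k+1))⁻¹ * a (k+1) := by simp

/-- for every `t ∈ D_{ε,∞}` and `d ∈ D_ε`, the point `p·t + d` belongs to
`D_{ε,∞}`, and `p·(T_ε + t) = ⋃_{d ∈ D_ε} (T_ε + p·t + d)`: the tiling `T_ε + D_{ε,∞}`
is self-replicating with respect to multiplication by `p`. -/
theorem stmt13 (p : ℤ) (m : ℕ) (hm : 1 ≤ m) (hp : |p| = 2 * (m : ℤ) + 1) (ε : ℝ) :
    ∀ t ∈ Dinf p m ε,
      (∀ d ∈ Ddig m ε, (p : ℝ) • t + d ∈ Dinf p m ε) ∧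
      (p : ℝ) • ((· + t) '' Tset p m ε) =
        ⋃ d ∈ Ddig m ε, (· + ((p : ℝ) • t + d)) '' Tset p m ε := by
  intro t ht
  have hpR : 1 < |(p : ℝ)| := by
    rw [← Int.cast_abs, hp]
    push_cast
    have : (1:ℝ) ≤ (m:ℝ) := by exact_mod_cast hm
    linarith
  -- the key identity, packaged for elements of Tset
  have hsmul : ∀ z ∈ Tset p m ε, ∃ d ∈ Ddig m ε, ∃ w ∈ Tset p m ε,
      (p : ℝ) • z = d + w := by
    intro z hz
    obtain ⟨i, j, hi, hj, hz1, hz2⟩ := hz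
    refine ⟨((i 0 : ℝ) + bshift ε (j 0), (j 0 : ℝ)), ⟨i 0, j 0, hi 0, hj 0, rfl⟩,
      (∑' k : ℕ, ((p : ℝ) ^ (k+1))⁻¹ * ((i (k+1) : ℝ) + bshift ε (j (k+1))),
       ∑' k : ℕ, ((p : ℝ) ^ (k+1))⁻¹ * (j (k+1) : ℝ)),
      ⟨fun k => i (k+1), fun k => j (k+1), fun k => hi (k+1), fun k => hj (k+1), rfl, rfl⟩,
      ?_⟩
    have hb1 : ∀ k, |(i k : ℝ) + bshift ε (j k)| ≤ (m : ℝ) + |ε| := by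
      intro k
      have h1 : |(i k : ℝ)| ≤ (m : ℝ) := by exact_mod_cast hi k
      calc |(i k : ℝ) + bshift ε (j k)| ≤ |(i k : ℝ)| + |bshift ε (j k)| := abs_add_le _ _
        _ ≤ (m : ℝ) + |ε| := add_le_add h1 (abs_bshift_le ε (j k))
    have hb2 : ∀ k, |(j k : ℝ)| ≤ (m : ℝ) := by intro k; exact_mod_cast hj k
    have e1 := key hpR (fun k => (i k : ℝ) + bshift ε (j k)) ((m : ℝ) + |ε|) hb1
    have e2 := key hpR (fun k => (j k : ℝ)) (m : ℝ) hb2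
    apply Prod.ext
    · show (p : ℝ) * z.1 = _
      rw [hz1]; exact e1
    · show (p : ℝ) * z.2 = _
      rw [hz2]; exact e2
  have hdiv : ∀ d ∈ Ddig m ε, ∀ w ∈ Tset p m ε, ∃ z ∈ Tset p m ε,
      (p : ℝ) • z = d + w := by
    intro d hd w hw
    obtain ⟨i0, j0, hi0, hj0, hdeq⟩ := hd
    obtain ⟨i', j', hi', hj', hw1, hw2⟩ := hw
    set i : ℕ → ℤ := fun k => match k with | 0 => i0 | k+1 => i' k with hidef
    set j : ℕ → ℤ := fun k => match k with | 0 => j0 | k+1 => j' k with hjdef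
    have hi : ∀ k, |i k| ≤ (m : ℤ) := by intro k; cases k with
      | zero => exact hi0
      | succ n => exact hi' n
    have hj : ∀ k, |j k| ≤ (m : ℤ) := by intro k; cases k with
      | zero => exact hj0
      | succ n => exact hj' n
    refine ⟨(∑' k : ℕ, ((p : ℝ) ^ (k+1))⁻¹ * ((i k : ℝ) + bshift ε (j k)),
             ∑' k : ℕ, ((p : ℝ) ^ (k+1))⁻¹ * (j k : ℝ)),
      ⟨i, j, hi, hj, rfl, rfl⟩, ?_⟩
    have hb1 : ∀ k, |(i k : ℝ) + bshift ε (j k)| ≤ (m : ℝ) + |ε| := by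
      intro k
      have h1 : |(i k : ℝ)| ≤ (m : ℝ) := by exact_mod_cast hi k
      calc |(i k : ℝ) + bshift ε (j k)| ≤ |(i k : ℝ)| + |bshift ε (j k)| := abs_add_le _ _
        _ ≤ (m : ℝ) + |ε| := add_le_add h1 (abs_bshift_le ε (j k))
    have hb2 : ∀ k, |(j k : ℝ)| ≤ (m : ℝ) := by intro k; exact_mod_cast hj k
    have e1 := key hpR (fun k => (i k : ℝ) + bshift ε (j k)) ((m : ℝ) + |ε|) hb1
    have e2 := key hpR (fun k => (j k : ℝ)) (m : ℝ) hb2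
    apply Prod.ext
    · show (p : ℝ) * _ = d.1 + w.1
      rw [e1, hdeq, hw1]
    · show (p : ℝ) * _ = d.2 + w.2
      rw [e2, hdeq, hw2]
  constructor
  · -- part 1
    intro d hd
    obtain ⟨k, hk, dfun, hdmem, hteq⟩ := ht
    refine ⟨k + 1, by omega, fun l => match l with | 0 => d | l+1 => dfun l, ?_, ?_⟩
    · intro l hl
      cases l with
      | zero => exact hd
      | succ n => exact hdmem n (by omega)
    · rw [Finset.sum_range_succ']
      simp only [pow_zero, one_smul]
      rw [hteq, Finset.smul_sum]
      congr 1
      apply Finset.sum_congr rfl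
      intro l _
      rw [smul_smul, ← pow_succ']
  · -- part 2
    ext x
    simp only [Set.mem_smul_set, Set.mem_image, Set.mem_iUnion]
    constructor
    · rintro ⟨y, ⟨z, hz, rfl⟩, rfl⟩
      obtain ⟨d, hd, w, hw, hpz⟩ := hsmul z hz
      refine ⟨d, hd, w, hw, ?_⟩
      rw [smul_add, hpz]
      abel
    · rintro ⟨d, hd, w, hw, rfl⟩
      obtain ⟨z, hz, hpz⟩ := hdiv d hd w hw
      refine ⟨z + t, ⟨z, hz, rfl⟩, ?_⟩
      rw [smul_add, hpz]
      abel
end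
end

section
/- For every finite subset Σ ⊆ D_{ε,∞} there exists R > 0 such that for every x ∈ ℝ² there exists t ∈ ℝ² with t + Σ ⊆ D_{ε,∞} and t + Σ contained in the closed ball of radius R centered at x. (Local isomorphism property of the tiling T_ε + D_{ε,∞}.) -/
noncomputable section

/-- The Euclidean norm on `ℝ × ℝ`. -/
def eucNorm (z : ℝ × ℝ) : ℝ := Real.sqrt (z.1 ^ 2 + z.2 ^ 2)

/- ### Auxiliary lemmas -/

lemma eucNorm_eq_complexAbs (z : ℝ × ℝ) : eucNorm z = ‖(⟨z.1, z.2⟩ : ℂ)‖ := by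
  rw [eucNorm, Complex.norm_def, Complex.normSq_mk]
  ring_nf

lemma eucNorm_add_le (a b : ℝ × ℝ) : eucNorm (a + b) ≤ eucNorm a + eucNorm b := by
  rw [eucNorm_eq_complexAbs, eucNorm_eq_complexAbs, eucNorm_eq_complexAbs]
  have : (⟨(a + b).1, (a + b).2⟩ : ℂ) = ⟨a.1, a.2⟩ + ⟨b.1, b.2⟩ := by
    simp [Complex.ext_iff, Prod.fst_add, Prod.snd_add]
  rw [this]
  exact norm_add_le _ _

lemma eucNorm_smul (c : ℝ) (z : ℝ × ℝ) : eucNorm (c • z) = |c| * eucNorm z := by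
  rw [eucNorm_eq_complexAbs, eucNorm_eq_complexAbs]
  have : (⟨(c • z).1, (c • z).2⟩ : ℂ) = (c : ℂ) * ⟨z.1, z.2⟩ := by
    simp [Complex.ext_iff, Prod.smul_fst, Prod.smul_snd, smul_eq_mul]
  rw [this, norm_mul, Complex.norm_real, Real.norm_eq_abs]

lemma zero_mem_Ddig (m : ℕ) (ε : ℝ) : (0 : ℝ × ℝ) ∈ Ddig m ε := by
  refine ⟨0, 0, by simp, by simp, ?_⟩
  simp [bshift, Prod.ext_iff, Int.not_odd_iff_even]

/-- Balanced base-`p` representation of integers. -/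
lemma int_rep (p : ℤ) (m : ℕ) (hm : 1 ≤ m) (hp : |p| = 2 * (m : ℤ) + 1) (n : ℤ) :
    ∃ k : ℕ, ∃ j : ℕ → ℤ, (∀ l, |j l| ≤ (m : ℤ)) ∧ (∀ l, k ≤ l → j l = 0) ∧
      n = ∑ l ∈ Finset.range k, p ^ l * j l := by
  have hp0 : (0:ℤ) < 2 * (m : ℤ) + 1 := by positivity
  have H : ∀ N : ℕ, ∀ n : ℤ, n.natAbs ≤ N →
      ∃ k : ℕ, ∃ j : ℕ → ℤ, (∀ l, |j l| ≤ (m : ℤ)) ∧ (∀ l, k ≤ l → j l = 0) ∧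
        n = ∑ l ∈ Finset.range k, p ^ l * j l := by
    intro N
    induction N with
    | zero =>
      intro n hn
      have : n = 0 := by omega
      exact ⟨0, fun _ => 0, fun l => by simp, fun l _ => rfl, by simp [this]⟩
    | succ N IH =>
      intro n hn
      rcases eq_or_ne n 0 with rfl | hne
      · exact ⟨0, fun _ => 0, fun l => by simp, fun l _ => rfl, by simp⟩
      · set q : ℤ := 2 * (m : ℤ) + 1 with hq
        have hr0 : 0 ≤ n % q := Int.emod_nonneg n (by omega)
        have hr1 : n % q < q := Int.emod_lt_of_pos n hp0
        set r : ℤ := n % q with hrdef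
        set j0 : ℤ := if r ≤ (m : ℤ) then r else r - q with hj0
        have hj0abs : |j0| ≤ (m : ℤ) := by
          rw [hj0]; split <;> rw [abs_le] <;> omega
        have hdvd : q ∣ n - j0 := by
          have h1 : q ∣ n - r := Int.dvd_self_sub_of_emod_eq rfl
          rw [hj0]
          split
          · exact h1
          · have : n - (r - q) = (n - r) + q := by ring
            rw [this]; exact dvd_add h1 dvd_rfl
        have hpdvd : p ∣ n - j0 := by
          rwa [← abs_dvd, hp]
        set n' : ℤ := (n - j0) / p with hn'
        have hpne : p ≠ 0 := by
          intro h; rw [h] at hp; simp at hp; omega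
        have heq : n = j0 + p * n' := by
          rw [hn', Int.mul_ediv_cancel' hpdvd]; ring
        have habsn : 1 ≤ |n| := by
          rcases lt_or_ge 0 |n| with h | h
          · omega
          · exfalso; exact hne (abs_eq_zero.mp (le_antisymm h (abs_nonneg n)))
        have hbound : |n'| < |n| := by
          by_contra h
          push_neg at h
          have h1 : |n - j0| = |n'| * q := by
            rw [heq]
            have : j0 + p * n' - j0 = p * n' := by ring
            rw [this, abs_mul, hp, mul_comm]
          have h2 : |n - j0| ≤ |n| + (m : ℤ) := by
            calc |n - j0| ≤ |n| + |j0| := abs_sub n j0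
            _ ≤ |n| + (m : ℤ) := by omega
          nlinarith [habsn]
        have hN' : n'.natAbs ≤ N := by
          rw [Int.abs_eq_natAbs n', Int.abs_eq_natAbs n] at hbound
          omega
        obtain ⟨k, j, hjm, hjz, hsum⟩ := IH n' hN'
        refine ⟨k + 1, fun l => if l = 0 then j0 else j (l - 1), ?_, ?_, ?_⟩
        · intro l; by_cases h : l = 0 <;> simp [h, hj0abs, hjm]
        · intro l hl
          have : l ≠ 0 := by omega
          simp [this]
          exact hjz _ (by omega)
        · rw [Finset.sum_range_succ']
          simp only [Nat.add_sub_cancel, if_neg (Nat.succ_ne_zero _)]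
          simp only [if_pos rfl, pow_zero, one_mul]
          rw [heq, hsum, Finset.mul_sum]
          rw [add_comm]
          congr 1
          apply Finset.sum_congr rfl
          intro l _
          ring
  exact H n.natAbs n le_rfl

/-- Representation with flexible length. -/
lemma int_rep' (p : ℤ) (m : ℕ) (hm : 1 ≤ m) (hp : |p| = 2 * (m : ℤ) + 1) (n : ℤ) :
    ∃ k : ℕ, ∃ j : ℕ → ℤ, (∀ l, |j l| ≤ (m : ℤ)) ∧ (∀ l, k ≤ l → j l = 0) ∧
      ∀ K, k ≤ K → n = ∑ l ∈ Finset.range K, p ^ l * j l := by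
  obtain ⟨k, j, hjm, hjz, hsum⟩ := int_rep p m hm hp n
  refine ⟨k, j, hjm, hjz, fun K hK => ?_⟩
  rw [hsum]
  apply Finset.sum_subset (Finset.range_subset_range.mpr hK)
  intro l _ hl
  rw [hjz l (by simpa using hl)]
  ring

/-- Padded representation of elements of `Dinf`. -/
lemma Dinf_rep (p : ℤ) (m : ℕ) (ε : ℝ) {x : ℝ × ℝ} (hx : x ∈ Dinf p m ε) :
    ∃ k : ℕ, 1 ≤ k ∧ ∃ d : ℕ → ℝ × ℝ, (∀ l, d l ∈ Ddig m ε) ∧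
      ∀ K, k ≤ K → x = ∑ l ∈ Finset.range K, (p : ℝ) ^ l • d l := by
  obtain ⟨k, hk, d, hd, hsum⟩ := hx
  refine ⟨k, hk, fun l => if l < k then d l else 0, ?_, ?_⟩
  · intro l
    by_cases h : l < k
    · simp [h]; exact hd l h
    · simp [h, zero_mem_Ddig]
  · intro K hK
    rw [hsum]
    symm
    rw [show (∑ l ∈ Finset.range K, (p : ℝ) ^ l • (if l < k then d l else 0)) =
        ∑ l ∈ Finset.range k, (p : ℝ) ^ l • (if l < k then d l else 0) from ?_]
    · apply Finset.sum_congr rfl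
      intro l hl
      simp [Finset.mem_range.mp hl]
    · symm
      apply Finset.sum_subset (Finset.range_subset_range.mpr hK)
      intro l _ hl
      have : ¬ l < k := by simpa using hl
      simp [this]

/-- Every point of the plane is within Euclidean distance 1 of a point of `Dinf`. -/
lemma Dinf_dense (p : ℤ) (m : ℕ) (hm : 1 ≤ m) (hp : |p| = 2 * (m : ℤ) + 1) (ε : ℝ)
    (y : ℝ × ℝ) : ∃ w ∈ Dinf p m ε, eucNorm (w - y) ≤ 1 := by
  -- represent the second coordinate
  obtain ⟨k2, j, hjm, hjz, hjsum⟩ := int_rep' p m hm hp (round y.2)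
  set c : ℝ := ∑ l ∈ Finset.range k2, (p : ℝ) ^ l * bshift ε (j l) with hc
  obtain ⟨k1, i, him, hiz, hisum⟩ := int_rep' p m hm hp (round (y.1 - c))
  set K : ℕ := max (max k1 k2) 1 with hK
  have hK1 : k1 ≤ K := le_trans (le_max_left _ _) (le_max_left _ _)
  have hK2 : k2 ≤ K := le_trans (le_max_right _ _) (le_max_left _ _)
  have hKpos : 1 ≤ K := le_max_right _ _
  set d : ℕ → ℝ × ℝ := fun l => ((i l : ℝ) + bshift ε (j l), (j l : ℝ)) with hd
  set w : ℝ × ℝ := ∑ l ∈ Finset.range K, (p : ℝ) ^ l • d l with hw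
  have hcK : (∑ l ∈ Finset.range K, (p : ℝ) ^ l * bshift ε (j l)) = c := by
    rw [hc]
    symm
    apply Finset.sum_subset (Finset.range_subset_range.mpr hK2)
    intro l _ hl
    have : j l = 0 := hjz l (by simpa using hl)
    simp [this, bshift, Int.not_odd_iff_even]
  have hw1 : w.1 = (round (y.1 - c) : ℝ) + c := by
    rw [hw, Prod.fst_sum]
    simp only [hd, Prod.smul_fst, smul_eq_mul]
    rw [show (∑ l ∈ Finset.range K, (p:ℝ) ^ l * ((i l : ℝ) + bshift ε (j l)))
        = (∑ l ∈ Finset.range K, (p:ℝ) ^ l * (i l : ℝ))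
          + ∑ l ∈ Finset.range K, (p:ℝ) ^ l * bshift ε (j l) from by
      rw [← Finset.sum_add_distrib]; apply Finset.sum_congr rfl; intro l _; ring]
    rw [hcK]
    congr 1
    have := hisum K hK1
    rw [this]
    push_cast
    rfl
  have hw2 : w.2 = (round y.2 : ℝ) := by
    rw [hw, Prod.snd_sum]
    simp only [hd, Prod.smul_snd, smul_eq_mul]
    have := hjsum K hK2
    rw [this]
    push_cast
    rfl
  refine ⟨w, ⟨K, hKpos, d, fun l _ => ⟨i l, j l, him l, hjm l, rfl⟩, hw⟩, ?_⟩
  have h1 : |(w - y).1| ≤ 1/2 := by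
    have : (w - y).1 = (round (y.1 - c) : ℝ) - (y.1 - c) := by
      rw [Prod.fst_sub, hw1]; ring
    rw [this, ← abs_neg]
    have := abs_sub_round (y.1 - c)
    rw [show -((round (y.1 - c) : ℝ) - (y.1 - c)) = (y.1 - c) - round (y.1 - c) from by ring]
    exact this
  have h2 : |(w - y).2| ≤ 1/2 := by
    have : (w - y).2 = (round y.2 : ℝ) - y.2 := by rw [Prod.snd_sub, hw2]
    rw [this, ← abs_neg, show -((round y.2 : ℝ) - y.2) = y.2 - round y.2 from by ring]
    exact abs_sub_round y.2
  rw [eucNorm]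
  have hsq : (w - y).1 ^ 2 + (w - y).2 ^ 2 ≤ 1 := by
    nlinarith [abs_nonneg (w - y).1, abs_nonneg (w - y).2, sq_abs (w - y).1, sq_abs (w - y).2]
  calc Real.sqrt ((w - y).1 ^ 2 + (w - y).2 ^ 2) ≤ Real.sqrt 1 := Real.sqrt_le_sqrt hsq
  _ = 1 := Real.sqrt_one

/-- local isomorphism property: for every finite `Σ ⊆ D_{ε,∞}` there is
`R > 0` such that every closed ball of radius `R` contains a translate `t + Σ ⊆ D_{ε,∞}`. -/
theorem stmt14 (p : ℤ) (m : ℕ) (hm : 1 ≤ m) (hp : |p| = 2 * (m : ℤ) + 1) (ε : ℝ)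
    (S : Set (ℝ × ℝ)) (hS : S ⊆ Dinf p m ε) (hfin : S.Finite) :
    ∃ R : ℝ, 0 < R ∧ ∀ x : ℝ × ℝ, ∃ t : ℝ × ℝ,
      ∀ s ∈ S, t + s ∈ Dinf p m ε ∧ eucNorm (t + s - x) ≤ R := by
  have hpne : (p : ℝ) ≠ 0 := by
    intro h
    have : p = 0 := by exact_mod_cast h
    rw [this] at hp; simp at hp; omega
  -- uniform representation length for S
  have hrep : ∀ s ∈ S, ∃ k : ℕ, 1 ≤ k ∧ ∃ d : ℕ → ℝ × ℝ, (∀ l, d l ∈ Ddig m ε) ∧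
      ∀ K, k ≤ K → s = ∑ l ∈ Finset.range K, (p : ℝ) ^ l • d l :=
    fun s hs => Dinf_rep p m ε (hS hs)
  choose! kf hkf df hdf hsumf using hrep
  set K : ℕ := max 1 (hfin.toFinset.sup kf) with hKdef
  have hKs : ∀ s ∈ S, kf s ≤ K := by
    intro s hs
    exact le_trans (Finset.le_sup (hfin.mem_toFinset.mpr hs)) (le_max_right _ _)
  -- bound on the norms of elements of S
  obtain ⟨B, hB⟩ : ∃ B : ℝ, ∀ s ∈ S, eucNorm s ≤ B := by
    obtain ⟨B, hB⟩ := (hfin.image eucNorm).bddAbove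
    exact ⟨B, fun s hs => hB (Set.mem_image_of_mem _ hs)⟩
  set R : ℝ := |(p : ℝ)| ^ K + max B 0 + 1 with hR
  have hppos : 0 < |(p : ℝ)| := abs_pos.mpr hpne
  refine ⟨R, by positivity, fun x => ?_⟩
  -- find w close to x / p^K
  set y : ℝ × ℝ := ((p : ℝ) ^ K)⁻¹ • x with hy
  obtain ⟨w, hwmem, hwnorm⟩ := Dinf_dense p m hm hp ε y
  set t : ℝ × ℝ := (p : ℝ) ^ K • w with ht
  refine ⟨t, fun s hs => ⟨?_, ?_⟩⟩
  · -- t + s ∈ Dinf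
    obtain ⟨k', hk', e, he, hesum⟩ := hwmem
    have hsK : s = ∑ l ∈ Finset.range K, (p : ℝ) ^ l • df s l := hsumf s hs K (hKs s hs)
    refine ⟨K + k', by omega, fun l => if l < K then df s l else e (l - K), ?_, ?_⟩
    · intro l hl
      by_cases h : l < K
      · simp [h]; exact hdf s hs l
      · simp [h]; exact he (l - K) (by omega)
    · rw [Finset.sum_range_add]
      have hfirst : (∑ l ∈ Finset.range K, (p:ℝ) ^ l • (if l < K then df s l else e (l - K))) = s := by
        calc (∑ l ∈ Finset.range K, (p:ℝ) ^ l • (if l < K then df s l else e (l - K)))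
            = ∑ l ∈ Finset.range K, (p:ℝ) ^ l • df s l :=
              Finset.sum_congr rfl fun l hl => by simp [Finset.mem_range.mp hl]
          _ = s := hsK.symm
      have hsecond : (∑ l ∈ Finset.range k',
          (p:ℝ) ^ (K + l) • (if K + l < K then df s (K + l) else e (K + l - K))) = t := by
        rw [ht, hesum, Finset.smul_sum]
        apply Finset.sum_congr rfl
        intro l _
        have h : ¬ K + l < K := by omega
        simp only [h, if_false, Nat.add_sub_cancel_left]
        rw [smul_smul, pow_add]
      rw [hfirst, hsecond, add_comm]
  · -- norm bound
    have hxy : (p : ℝ) ^ K • y = x := by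
      rw [hy, smul_smul, mul_inv_cancel₀ (pow_ne_zero _ hpne), one_smul]
    have hdecomp : t + s - x = (p : ℝ) ^ K • (w - y) + s := by
      rw [ht, ← hxy, smul_sub]; abel
    rw [hdecomp]
    calc eucNorm ((p : ℝ) ^ K • (w - y) + s)
        ≤ eucNorm ((p : ℝ) ^ K • (w - y)) + eucNorm s := eucNorm_add_le _ _
      _ = |(p : ℝ) ^ K| * eucNorm (w - y) + eucNorm s := by rw [eucNorm_smul]
      _ ≤ |(p : ℝ)| ^ K * 1 + max B 0 := by
          rw [abs_pow]
          have h1 : eucNorm s ≤ max B 0 := le_trans (hB s hs) (le_max_left _ _)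
          have h3 : (0:ℝ) ≤ |(p : ℝ)| ^ K := by positivity
          have h4 := mul_le_mul_of_nonneg_left hwnorm h3
          linarith
      _ ≤ R := by rw [hR, mul_one]; have := le_max_right B 0; linarith
end
end

section
/- If ε is irrational, then the set of difference vectors { d − d' : d, d' ∈ D_{ε,∞}, ‖d − d'‖ ≤ √2 } is infinite; consequently the tiling T_ε + D_{ε,∞} fails the local finiteness property and is not quasi-periodic. -/
noncomputable section

lemma two_mul_add_one_le_three_pow (n : ℕ) : 2 * n + 1 ≤ 3 ^ n := by
  induction n with
  | zero => simp
  | succ n ih =>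
    rw [pow_succ]
    have h : 3 ^ n * 3 = 3 ^ n + 3 ^ n + 3 ^ n := by ring
    omega

/-- Balanced representation: every integer `A` with `2|A| ≤ |p|^K - 1` is a sum
`∑_{l<K} p^l i_l` with digits `|i_l| ≤ m`. -/
lemma rep_balanced (p : ℤ) (m : ℕ) (hm : 1 ≤ m) (hp : |p| = 2 * (m : ℤ) + 1) :
    ∀ K : ℕ, ∀ A : ℤ, 2 * |A| ≤ |p| ^ K - 1 →
      ∃ i : ℕ → ℤ, (∀ l, |i l| ≤ (m : ℤ)) ∧ A = ∑ l ∈ Finset.range K, p ^ l * i l := by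
  intro K
  induction K with
  | zero =>
    intro A hA
    refine ⟨0, by simp, ?_⟩
    simp only [Finset.range_zero, Finset.sum_empty]
    simp only [pow_zero] at hA
    have h1 := abs_nonneg A
    have h2 : |A| = 0 := by omega
    have := abs_eq_zero.mp h2
    omega
  | succ K ih =>
    intro A hA
    have hq0 : (0:ℤ) < |p| := by omega
    set q : ℤ := |p| with hqdef
    set r0 : ℤ := A % q with hr0def
    have hr01 : 0 ≤ r0 := Int.emod_nonneg A (by omega)
    have hr02 : r0 < q := Int.emod_lt_of_pos A hq0
    set r : ℤ := if r0 ≤ (m:ℤ) then r0 else r0 - q with hrdef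
    have hrbd : |r| ≤ (m:ℤ) := by
      rw [hrdef]; split <;> rw [abs_le] <;> omega
    have hdvd0 : q ∣ A - r0 := ⟨A / q, by rw [hr0def, Int.emod_def]; ring⟩
    have hdvdq : q ∣ A - r := by
      rw [hrdef]; split
      · exact hdvd0
      · have : A - (r0 - q) = (A - r0) + q := by ring
        rw [this]; exact dvd_add hdvd0 (dvd_refl q)
    have hdvd : p ∣ A - r := (abs_dvd p (A - r)).mp hdvdq
    set c : ℤ := (A - r) / p with hcdef
    have hc : A = p * c + r := by
      have := Int.ediv_mul_cancel hdvd
      rw [hcdef]; linarith [this]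
    -- bound on c
    have hcbd : 2 * |c| ≤ q ^ K - 1 := by
      have habs : q * |c| = |A - r| := by
        have : |p * c| = |p| * |c| := abs_mul p c
        rw [← this]
        congr 1
        omega
      have h1 : |A - r| ≤ |A| + |r| := abs_sub A r
      have h2 : q * (2 * |c|) ≤ 2 * |A| + 2 * |r| := by nlinarith [habs, h1]
      have hpow : q ^ (K+1) = q * q ^ K := by rw [pow_succ]; ring
      have h3 : q * (2 * |c|) ≤ q * q ^ K + q - 2 := by
        calc q * (2 * |c|) ≤ 2 * |A| + 2 * |r| := h2
          _ ≤ (q ^ (K+1) - 1) + 2 * (m:ℤ) := by omega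
          _ = q * q ^ K + q - 2 := by rw [hpow]; omega
      have h4 : 2 * |c| ≤ q ^ K := by nlinarith [h3, hq0]
      -- q^K is odd, 2|c| is even
      have hodd : Odd (q ^ K) := Odd.pow ⟨(m:ℤ), by omega⟩
      obtain ⟨t, ht⟩ := hodd
      omega
    obtain ⟨e, he1, he2⟩ := ih c hcbd
    refine ⟨fun l => if l = 0 then r else e (l - 1), fun l => ?_, ?_⟩
    · dsimp only; split
      · exact hrbd
      · exact he1 _
    · rw [Finset.sum_range_succ']
      simp only [Nat.add_sub_cancel, if_neg (Nat.succ_ne_zero _), if_pos rfl, pow_zero,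
        one_mul, if_true]
      have : ∑ l ∈ Finset.range K, p ^ (l + 1) * e l
          = p * ∑ l ∈ Finset.range K, p ^ l * e l := by
        rw [Finset.mul_sum]; apply Finset.sum_congr rfl; intro l _; ring
      rw [this, ← he2, hc]

/-- if `ε` is irrational then the set of difference vectors of `D_{ε,∞}`
of Euclidean norm at most `√2` is infinite (failure of local finiteness). -/
theorem stmt15 (p : ℤ) (m : ℕ) (hm : 1 ≤ m) (hp : |p| = 2 * (m : ℤ) + 1) (ε : ℝ)
    (hε : Irrational ε) :
    {v : ℝ × ℝ | ∃ d ∈ Dinf p m ε, ∃ d' ∈ Dinf p m ε,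
        v = d - d' ∧ eucNorm v ≤ Real.sqrt 2}.Infinite := by
  have hm1 : (1:ℤ) ≤ (m:ℤ) := by exact_mod_cast hm
  have hp0 : p ≠ 0 := by
    intro h; rw [h] at hp; simp at hp; omega
  have hq3 : (3:ℤ) ≤ |p| := by omega
  set q : ℤ := |p| with hqdef
  obtain ⟨σ, hσ, hpσ⟩ : ∃ σ : ℤ, (σ = 1 ∨ σ = -1) ∧ p * σ = q := by
    rcases lt_or_gt_of_ne hp0 with h | h
    · exact ⟨-1, Or.inr rfl, by rw [hqdef, abs_of_neg h]; ring⟩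
    · exact ⟨1, Or.inl rfl, by rw [hqdef, abs_of_pos h]; ring⟩
  have hσl : ∀ l : ℕ, σ ^ l = 1 ∨ σ ^ l = -1 := by
    intro l
    rcases hσ with h | h
    · left; rw [h, one_pow]
    · rw [h]; rcases Nat.even_or_odd l with he | ho
      · left; exact he.neg_one_pow
      · right; exact ho.neg_one_pow
  have hpq : ∀ l : ℕ, p ^ l * σ ^ l = q ^ l := by
    intro l; rw [← mul_pow, hpσ]
  apply Set.infinite_of_injective_forall_mem
    (f := fun k : ℕ => ((Int.fract (ε * (p:ℝ) ^ k), (1:ℝ)) : ℝ × ℝ))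
  · -- injectivity
    intro k k' h
    by_contra hkk
    have h1 : Int.fract (ε * (p:ℝ) ^ k) = Int.fract (ε * (p:ℝ) ^ k') :=
      congrArg Prod.fst h
    rw [Int.fract_eq_fract] at h1
    obtain ⟨z, hz⟩ := h1
    have hc : (p ^ k - p ^ k' : ℤ) ≠ 0 := by
      intro hc
      apply hkk
      have heq : p ^ k = p ^ k' := by omega
      have h2 : p.natAbs ^ k = p.natAbs ^ k' := by
        rw [← Int.natAbs_pow, ← Int.natAbs_pow, heq]
      have hna : 2 ≤ p.natAbs := by
        have := Int.abs_eq_natAbs p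
        omega
      exact Nat.pow_right_injective hna h2
    have hirr : Irrational (ε * ((p ^ k - p ^ k' : ℤ) : ℝ)) := hε.mul_intCast hc
    apply hirr.ne_int z
    push_cast
    linear_combination hz
  · -- membership
    intro k
    set x : ℝ := ε * (p:ℝ) ^ k with hxdef
    set A : ℤ := -⌊x⌋ with hAdef
    set K : ℕ := k + 1 + A.natAbs with hKdef
    have hK1 : k + 1 ≤ K := by omega
    have hK2 : 2 * |A| ≤ q ^ K - 1 := by
      have h3 : (3:ℤ) ^ K ≤ q ^ K := pow_le_pow_left₀ (by norm_num) hq3 K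
      have h4 : (2 * K + 1 : ℕ) ≤ 3 ^ K := two_mul_add_one_le_three_pow K
      have h5 : ((2 * K + 1 : ℕ) : ℤ) ≤ (3:ℤ) ^ K := by exact_mod_cast h4
      have h6 : |A| = (A.natAbs : ℤ) := Int.abs_eq_natAbs A
      push_cast at h5
      omega
    obtain ⟨i, hibd, hisum⟩ := rep_balanced p m hm hp K A hK2
    set j : ℕ → ℤ := fun l => if l < k then -σ ^ l * m else if l = k then σ ^ k else 0
      with hjdef
    set j' : ℕ → ℤ := fun l => if l < k then σ ^ l * m else 0 with hj'def
    set d : ℕ → ℝ × ℝ := fun l => (((i l : ℝ) + bshift ε (j l), ((j l : ℝ)))) with hddef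
    set d' : ℕ → ℝ × ℝ := fun l => (((0:ℤ) : ℝ) + bshift ε (j' l), ((j' l : ℝ))) with hd'def
    have hjbd : ∀ l, |j l| ≤ (m:ℤ) := by
      intro l
      rw [hjdef]; dsimp only
      split
      · rcases hσl l with h | h <;> rw [h, abs_le] <;> constructor <;> omega
      · split
        · rcases hσl k with h | h <;> rw [h, abs_le] <;> constructor <;> omega
        · rw [abs_le]; omega
    have hj'bd : ∀ l, |j' l| ≤ (m:ℤ) := by
      intro l
      rw [hj'def]; dsimp only
      split
      · rcases hσl l with h | h <;> rw [h, abs_le] <;> constructor <;> omega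
      · rw [abs_le]; omega
    have hdmem : ∑ l ∈ Finset.range K, (p : ℝ) ^ l • d l ∈ Dinf p m ε := by
      exact ⟨K, by omega, d, fun l _ => ⟨i l, j l, hibd l, hjbd l, rfl⟩, rfl⟩
    have hd'mem : ∑ l ∈ Finset.range K, (p : ℝ) ^ l • d' l ∈ Dinf p m ε := by
      exact ⟨K, by omega, d', fun l _ => ⟨0, j' l, by simp [hm1], hj'bd l, rfl⟩, rfl⟩
    refine ⟨_, hdmem, _, hd'mem, ?_, ?_⟩
    · -- the difference equals (fract x, 1)
      rw [← Finset.sum_sub_distrib]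
      have hterm : ∀ l, (p : ℝ) ^ l • d l - (p : ℝ) ^ l • d' l
          = ((p:ℝ) ^ l * ((i l : ℝ) + (bshift ε (j l) - bshift ε (j' l))),
             (p:ℝ) ^ l * ((j l : ℝ) - (j' l : ℝ))) := by
        intro l
        rw [hddef, hd'def]
        dsimp only
        rw [Prod.smul_mk, Prod.smul_mk, Prod.mk_sub_mk]
        simp only [smul_eq_mul, Prod.mk.injEq]
        push_cast
        constructor <;> ring
      simp only [hterm]
      apply Prod.ext
      · -- first coordinate
        rw [Prod.fst_sum]
        dsimp only
        have hsplit : ∑ l ∈ Finset.range K,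
            (p:ℝ) ^ l * ((i l : ℝ) + (bshift ε (j l) - bshift ε (j' l)))
            = (∑ l ∈ Finset.range K, (p:ℝ) ^ l * (i l : ℝ))
              + ∑ l ∈ Finset.range K, (p:ℝ) ^ l * (bshift ε (j l) - bshift ε (j' l)) := by
          rw [← Finset.sum_add_distrib]
          apply Finset.sum_congr rfl; intro l _; ring
        rw [hsplit]
        have hA : ∑ l ∈ Finset.range K, (p:ℝ) ^ l * (i l : ℝ) = (A : ℝ) := by
          rw [hisum]; push_cast; rfl
        have hB : ∑ l ∈ Finset.range K, (p:ℝ) ^ l * (bshift ε (j l) - bshift ε (j' l))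
            = (p:ℝ) ^ k * ε := by
          rw [Finset.sum_eq_single_of_mem k (Finset.mem_range.mpr (by omega))]
          · have hjk : j k = σ ^ k := by rw [hjdef]; simp
            have hj'k : j' k = 0 := by rw [hj'def]; simp
            rw [hjk, hj'k]
            have hodd : Odd (σ ^ k) := by
              rcases hσl k with h | h <;> rw [h]
              · exact ⟨0, by ring⟩
              · exact ⟨-1, by ring⟩
            have hnodd : ¬ Odd (0:ℤ) := by norm_num
            rw [bshift, bshift, if_pos hodd, if_neg hnodd]
            ring
          · intro l _ hlk
            rcases lt_or_gt_of_ne hlk with hlt | hgt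
            · have hjl : j l = -(σ ^ l * m) := by rw [hjdef]; simp only [if_pos hlt]; ring
              have hj'l : j' l = σ ^ l * m := by rw [hj'def]; simp [hlt]
              rw [hjl, hj'l]
              have : bshift ε (-(σ ^ l * m)) = bshift ε (σ ^ l * m) := by
                rw [bshift, bshift]
                congr 1
                simp [odd_neg]
              rw [this]; ring
            · have hjl : j l = 0 := by
                rw [hjdef]; simp only
                rw [if_neg (by omega), if_neg (by omega)]
              have hj'l : j' l = 0 := by
                rw [hj'def]; simp only
                rw [if_neg (by omega)]
              rw [hjl, hj'l]; ring
        rw [hA, hB]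
        rw [hAdef]
        push_cast
        rw [Int.fract]
        rw [hxdef]
        ring
      · -- second coordinate
        rw [Prod.snd_sum]
        dsimp only
        have hint : ∑ l ∈ Finset.range K, p ^ l * (j l - j' l) = 1 := by
          have hsub : ∑ l ∈ Finset.range (k+1), (fun l => p ^ l * (j l - j' l)) l
              = ∑ l ∈ Finset.range K, (fun l => p ^ l * (j l - j' l)) l := by
            apply Finset.sum_subset
            · exact Finset.range_mono hK1
            · intro l _ hl
              rw [Finset.mem_range, not_lt] at hl
              have hjl : j l = 0 := by
                rw [hjdef]; simp only
                rw [if_neg (by omega), if_neg (by omega)]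
              have hj'l : j' l = 0 := by
                rw [hj'def]; simp only
                rw [if_neg (by omega)]
              simp [hjl, hj'l]
          rw [← hsub]
          rw [Finset.sum_range_succ]
          have hjk : j k = σ ^ k := by rw [hjdef]; simp
          have hj'k : j' k = 0 := by rw [hj'def]; simp
          have hlast : p ^ k * (j k - j' k) = q ^ k := by
            rw [hjk, hj'k, sub_zero, hpq]
          have hlow : ∑ l ∈ Finset.range k, p ^ l * (j l - j' l)
              = -(q ^ k - 1) := by
            have : ∀ l ∈ Finset.range k, p ^ l * (j l - j' l)
                = q ^ l * (-(2 * m)) := by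
              intro l hl
              rw [Finset.mem_range] at hl
              have hjl : j l = -σ ^ l * m := by rw [hjdef]; simp [hl]
              have hj'l : j' l = σ ^ l * m := by rw [hj'def]; simp [hl]
              rw [hjl, hj'l, ← hpq l]; ring
            rw [Finset.sum_congr rfl this]
            rw [← Finset.sum_mul]
            have hg := geom_sum_mul q k
            have h2m : q - 1 = 2 * (m:ℤ) := by omega
            linear_combination (-1 : ℤ) * hg + (∑ i ∈ Finset.range k, q ^ i) * h2m
          rw [hlast, hlow]
          ring
        have : ∑ l ∈ Finset.range K, (p:ℝ) ^ l * ((j l : ℝ) - (j' l : ℝ))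
            = ((∑ l ∈ Finset.range K, p ^ l * (j l - j' l) : ℤ) : ℝ) := by
          push_cast; rfl
        rw [this, hint]
        norm_num
    · -- norm bound
      rw [eucNorm]
      dsimp only
      apply Real.sqrt_le_sqrt
      have h1 := Int.fract_nonneg x
      have h2 := Int.fract_lt_one x
      nlinarith
end
end

section
/- If ε is a rational number, then for every c > 0 the set of difference vectors { d − d' : d, d' ∈ D_{ε,∞}, ‖d − d'‖ ≤ c } is finite; consequently the tiling T_ε + D_{ε,∞} has the local finiteness property. -/
noncomputable section

lemma dinf_lattice (p : ℤ) (m : ℕ) (q : ℚ) {x : ℝ × ℝ}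
    (hx : x ∈ Dinf p m (q : ℝ)) :
    ∃ a b : ℤ, x = ((a : ℝ) / (q.den : ℝ), (b : ℝ)) := by
  obtain ⟨k, hk, d, hd, rfl⟩ := hx
  have hd' : ∀ l, ∃ i j : ℤ, l < k →
      d l = ((i : ℝ) + bshift (q : ℝ) j, (j : ℝ)) := by
    intro l
    by_cases h : l < k
    · obtain ⟨i, j, _, _, hij⟩ := hd l h
      exact ⟨i, j, fun _ => hij⟩
    · exact ⟨0, 0, fun hl => absurd hl h⟩
  choose i j hij using hd'
  refine ⟨∑ l ∈ Finset.range k, p ^ l * (i l * (q.den : ℤ) + if Odd (j l) then q.num else 0),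
          ∑ l ∈ Finset.range k, p ^ l * j l, ?_⟩
  have hden : (q.den : ℝ) ≠ 0 := Nat.cast_ne_zero.mpr q.den_nz
  have hrat : (q : ℝ) = (q.num : ℝ) / (q.den : ℝ) := by rw [Rat.cast_def]
  ext
  · simp only [Prod.fst_sum]
    push_cast
    rw [Finset.sum_div]
    refine Finset.sum_congr rfl fun l hl => ?_
    rw [hij l (Finset.mem_range.mp hl)]
    simp only [Prod.smul_fst, smul_eq_mul, bshift]
    split_ifs with h
    · rw [hrat]; field_simp
      all_goals ring
    · field_simp
      all_goals ring
  · simp only [Prod.snd_sum]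
    push_cast
    refine Finset.sum_congr rfl fun l hl => ?_
    rw [hij l (Finset.mem_range.mp hl)]
    simp [smul_eq_mul]

lemma abs_fst_le (v : ℝ × ℝ) : |v.1| ≤ eucNorm v := by
  rw [eucNorm, ← Real.sqrt_sq_eq_abs v.1]
  exact Real.sqrt_le_sqrt (by nlinarith [sq_nonneg v.2, sq_abs v.1])

lemma abs_snd_le (v : ℝ × ℝ) : |v.2| ≤ eucNorm v := by
  rw [eucNorm, ← Real.sqrt_sq_eq_abs v.2]
  exact Real.sqrt_le_sqrt (by nlinarith [sq_nonneg v.1, sq_abs v.2])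

/-- if `ε` is rational then for every `c > 0` the set of difference vectors
of `D_{ε,∞}` of Euclidean norm at most `c` is finite (local finiteness property). -/
theorem stmt16 (p : ℤ) (m : ℕ) (hm : 1 ≤ m) (hp : |p| = 2 * (m : ℤ) + 1) (ε : ℝ)
    (hε : ∃ q : ℚ, ε = (q : ℝ)) :
    ∀ c : ℝ, 0 < c →
      {v : ℝ × ℝ | ∃ d ∈ Dinf p m ε, ∃ d' ∈ Dinf p m ε,
          v = d - d' ∧ eucNorm v ≤ c}.Finite := by
  obtain ⟨q, rfl⟩ := hε
  intro c hc
  set M₁ : ℤ := ⌈c * (q.den : ℝ)⌉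
  set M₂ : ℤ := ⌈c⌉
  have hfin : (((Set.Icc (-M₁) M₁) ×ˢ (Set.Icc (-M₂) M₂)) : Set (ℤ × ℤ)).Finite :=
    (Set.finite_Icc _ _).prod (Set.finite_Icc _ _)
  refine Set.Finite.subset (hfin.image
    (fun ab : ℤ × ℤ => ((ab.1 : ℝ) / (q.den : ℝ), (ab.2 : ℝ)))) ?_
  rintro v ⟨d, hd, d', hd', rfl, hnorm⟩
  obtain ⟨a, b, hab⟩ := dinf_lattice p m q hd
  obtain ⟨a', b', hab'⟩ := dinf_lattice p m q hd'
  have hdenpos : (0 : ℝ) < (q.den : ℝ) := Nat.cast_pos.mpr q.pos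
  have hv : d - d' = (((a - a' : ℤ) : ℝ) / (q.den : ℝ), ((b - b' : ℤ) : ℝ)) := by
    rw [hab, hab', Prod.mk_sub_mk]
    push_cast
    rw [div_sub_div_same]
  refine ⟨(a - a', b - b'), ?_, hv.symm⟩
  have h1 := (abs_fst_le (d - d')).trans hnorm
  have h2 := (abs_snd_le (d - d')).trans hnorm
  rw [hv] at h1 h2
  replace h1 : |((a - a' : ℤ) : ℝ) / (q.den : ℝ)| ≤ c := h1
  rw [abs_div, abs_of_pos hdenpos] at h1
  replace h2 : |((b - b' : ℤ) : ℝ)| ≤ c := h2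
  simp only [Set.mem_prod, Set.mem_Icc, ← abs_le]
  constructor
  · have : |((a - a' : ℤ) : ℝ)| ≤ c * (q.den : ℝ) := by
      rw [div_le_iff₀ hdenpos] at h1
      exact h1
    exact_mod_cast this.trans (Int.le_ceil _)
  · exact_mod_cast h2.trans (Int.le_ceil _)
end
end
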